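/- arXiv:2504.06873 — 2 statements merged into one kernel-verified Lean document; each statement's English description precedes it below -/
import Mathlib

section
/- Let K be a field, A and B commutative K-algebras, C a cocommutative K-coalgebra, ψ : C → Hom_K(A,B) a cocommutative coalgebra measuring, M an A-module, N a B-module, D a C-comodule, and φ : D → Hom_K(M,N) a C-comodule measuring from M to N relative to ψ. Then for each t ∈ D, the K-linear maps L^φ(t)[k] : M ⊗ A^{⊗k} → N ⊗ B^{⊗k}, m ⊗ a₁ ⊗ … ⊗ a_k ↦ Σ φ(t₍₀₎)(m) ⊗ ψ(t₍₁₎)(a₁) ⊗ … ⊗ ψ(t₍ₖ₎)(a_k) (sum over the iterated coaction/comultiplication of t), assemble into a natural transformation L^φ(t) : L(A,M) → L(B,N) of Γ-modules, i.e., of functors from the category Γ of finite pointed sets to Vect_K. -/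
/-!
Common infrastructure: the skeletal category `Γ` of finite pointed sets, coalgebra
measurings, comodule measurings, iterated comultiplications/coactions, the Sweedler-type
chain-level maps of a measuring, the Loday `Γ`-module data, and higher order Hochschild
homology of a `Γ`-module with respect to a pointed simplicial set (via left Kan extension
along `Γ → Sets_⋆`, followed by the Moore (alternating face map) complex and homology).
-/

open CategoryTheory TensorProduct PiTensorProduct

/-- A morphism of the skeletal category `Γ` of finite pointed sets, from
`[k] = {0,…,k}` to `[l] = {0,…,l}` (based at `0`). -/
@[ext] structure GammaHom (k l : ℕ) : Type where
  toFun : Fin (k + 1) → Fin (l + 1)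
  map_zero : toFun 0 = 0

/-- The identity of `[k]` in `Γ`. -/
def GammaHom.id (k : ℕ) : GammaHom k k := ⟨_root_.id, rfl⟩

/-- Composition in `Γ`. -/
def GammaHom.comp {k l p : ℕ} (g : GammaHom l p) (f : GammaHom k l) : GammaHom k p :=
  ⟨g.toFun ∘ f.toFun, by simp [Function.comp, f.map_zero, g.map_zero]⟩

/-- The skeletal category `Γ` of finite pointed sets `[k] = {0,1,…,k}` based at `0`. -/
structure GammaCat : Type where
  len : ℕ

instance : Category GammaCat where
  Hom a b := GammaHom a.len b.len
  id a := GammaHom.id a.len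
  comp f g := g.comp f
  id_comp _ := rfl
  comp_id _ := rfl
  assoc _ _ _ := rfl

/-- The inclusion `Γ → Sets_⋆` of `Γ` into the category of pointed sets. -/
def gammaToPointed : GammaCat ⥤ Pointed.{0} where
  obj a := ⟨Fin (a.len + 1), 0⟩
  map f := ⟨f.toFun, f.map_zero⟩
  map_id _ := rfl
  map_comp _ _ := rfl

/-- The fiber `f⁻¹(0) ∖ {0}` of `f : [k] → [l]` over the basepoint, with
`{1,…,k}` identified with `Fin k` via `i ↦ i.succ`. -/
def fiber0 {k l : ℕ} (f : GammaHom k l) : Finset (Fin k) :=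
  Finset.univ.filter fun i => f.toFun i.succ = 0

/-- The fiber `f⁻¹(j)` of `f : [k] → [l]` over `j ∈ {1,…,l}`, with
`{1,…,k}` identified with `Fin k` via `i ↦ i.succ`. -/
def fiber {k l : ℕ} (f : GammaHom k l) (j : Fin l) : Finset (Fin k) :=
  Finset.univ.filter fun i => f.toFun i.succ = j.succ

section Measuring

variable (K A B C : Type) [Field K]
variable [Ring A] [Algebra K A] [Ring B] [Algebra K B]
variable [AddCommGroup C] [Module K C] [Coalgebra K C]

/-- `ψ : C →ₗ[K] Hom_K(A,B)` is a coalgebra measuring from `A` to `B`: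
`ψ s (a * a') = Σ ψ s₍₁₎ a * ψ s₍₂₎ a'` (Sweedler sum over `Δ s = Σ s₍₁₎ ⊗ s₍₂₎`)
and `ψ s 1 = ε s • 1`. -/
structure IsMeasuring (ψ : C →ₗ[K] A →ₗ[K] B) : Prop where
  measures_mul : ∀ (s : C) (a a' : A),
    ψ s (a * a') =
      TensorProduct.lift ((LinearMap.mul K B).compl₁₂ (ψ.flip a) (ψ.flip a'))
        (Coalgebra.comul s)
  measures_one : ∀ s : C, ψ s 1 = Coalgebra.counit (R := K) s • (1 : B)

/-- The coalgebra `C` is cocommutative. -/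
def IsCocommutative : Prop :=
  (TensorProduct.comm K C C).toLinearMap ∘ₗ Coalgebra.comul =
    (Coalgebra.comul : C →ₗ[K] C ⊗[K] C)

end Measuring

section Comodule

variable (K C D : Type) [Field K]
variable [AddCommGroup C] [Module K C] [Coalgebra K C]
variable [AddCommGroup D] [Module K D]

/-- A (left) `C`-comodule structure `δ : D → C ⊗ D` on `D`, coassociative and counital. -/
structure CoactionStruct where
  δ : D →ₗ[K] C ⊗[K] D
  coassoc : (TensorProduct.assoc K C C D).toLinearMap ∘ₗ
      (Coalgebra.comul (R := K) (A := C)).rTensor D ∘ₗ δ = δ.lTensor C ∘ₗ δ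
  rTensor_counit_comp_coaction :
    (Coalgebra.counit (R := K) (A := C)).rTensor D ∘ₗ δ = TensorProduct.mk K K D 1

/-- Any coalgebra is a comodule over itself via its comultiplication. -/
def selfCoaction : CoactionStruct K C C where
  δ := Coalgebra.comul
  coassoc := Coalgebra.coassoc
  rTensor_counit_comp_coaction := Coalgebra.rTensor_counit_comp_comul

/-- Nested tensor powers `C ⊗ (C ⊗ (⋯ ⊗ (C ⊗ D)))` with `k` factors of `C`. -/
noncomputable def TD : ℕ → ModuleCat.{0} K
  | 0 => ModuleCat.of K D
  | (k+1) => ModuleCat.of K (C ⊗[K] TD k)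

/-- Iterated comultiplication of the first tensor factor,
`Δ^{(k)} ⊗ id : C ⊗ D → C^{⊗(k+1)} ⊗ D`, where `Δ^{(0)} = id` and
`Δ^{(j)} = (Δ ⊗ id^{⊗(j-1)}) ∘ Δ^{(j-1)}`. -/
noncomputable def comulIterTail : (k : ℕ) → (C ⊗[K] D) →ₗ[K] TD K C D (k+1)
  | 0 => LinearMap.id
  | (k+1) =>
      (((TensorProduct.assoc K C C (TD K C D k)).toLinearMap ∘ₗ
        (Coalgebra.comul (R := K) (A := C)).rTensor (TD K C D k)) ∘ₗ
        comulIterTail k)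

/-- The iterated coaction `D → C^{⊗k} ⊗ D` giving the iterated Sweedler coefficients
`t₍₁₎ ⊗ ⋯ ⊗ t₍ₖ₎ ⊗ t₍₀₎` of `t ∈ D`: the coaction `δ` followed by the `(k-1)`-fold
iterated comultiplication on the `C`-factor. -/
noncomputable def coactIter (ρ : CoactionStruct K C D) : (k : ℕ) → D →ₗ[K] TD K C D k
  | 0 => LinearMap.id
  | (k+1) => comulIterTail K C D k ∘ₗ ρ.δ

/-- The iterated comultiplication `Δ^{(k-1)} : C → C^{⊗k}` (with `Δ^{(0)} = id`,
`Δ^{(j)} = (Δ ⊗ id^{⊗(j-1)}) ∘ Δ^{(j-1)}`), giving the iterated Sweedler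
coefficients `s₍₁₎ ⊗ ⋯ ⊗ s₍ₖ₎` of `s ∈ C`. -/
noncomputable def comulIter : (k : ℕ) → C →ₗ[K] TD K C C k
  | 0 => LinearMap.id
  | (k+1) => comulIterTail K C C k ∘ₗ Coalgebra.comul

end Comodule

section ComodMeasuring

variable (K A B C D M N : Type) [Field K]
variable [Ring A] [Algebra K A] [Ring B] [Algebra K B]
variable [AddCommGroup C] [Module K C] [Coalgebra K C]
variable [AddCommGroup D] [Module K D]
variable [AddCommGroup M] [Module K M] [Module A M] [IsScalarTower K A M] [SMulCommClass K A M]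
variable [AddCommGroup N] [Module K N] [Module B N] [IsScalarTower K B N] [SMulCommClass K B N]

/-- The scalar action of `B` on the `B`-module `N`, as a `K`-bilinear map. -/
def lsmulKB : B →ₗ[K] N →ₗ[K] N :=
  LinearMap.mk₂ K (fun b n => b • n) (fun b b' n => add_smul b b' n)
    (fun c b n => smul_assoc c b n) (fun b n n' => smul_add b n n')
    (fun c b n => (smul_comm c b n).symm)

/-- `φ : D →ₗ[K] Hom_K(M,N)` is a `C`-comodule measuring from the `A`-module `M` to the
`B`-module `N`, relative to the measuring `ψ` and the coaction `ρ` on `D`: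
`φ t (a • m) = Σ ψ t₍₀₎ a • φ t₍₁₎ m` (Sweedler sum over `δ t = Σ t₍₀₎ ⊗ t₍₁₎`). -/
structure IsComodMeasuring (ψ : C →ₗ[K] A →ₗ[K] B) (ρ : CoactionStruct K C D)
    (φ : D →ₗ[K] M →ₗ[K] N) : Prop where
  measures : ∀ (t : D) (a : A) (m : M),
    φ t (a • m) =
      TensorProduct.lift ((lsmulKB K B N).compl₁₂ (ψ.flip a) (φ.flip m)) (ρ.δ t)

variable (ψ : C →ₗ[K] A →ₗ[K] B) (φ : D →ₗ[K] M →ₗ[K] N)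

/-- `c₁ ⊗ (c₂ ⊗ (⋯ ⊗ cₖ₊₁)) ↦ ψ c₁ a₁ * (ψ c₂ a₂ * (⋯ * ψ cₖ₊₁ aₖ₊₁))` : the ordered
product of the values of a measuring on the iterated Sweedler coefficients. -/
noncomputable def prodPair : (k : ℕ) → (Fin (k+1) → A) → (TD K C C k →ₗ[K] B)
  | 0, a => ψ.flip (a 0)
  | (k+1), a => TensorProduct.lift
      ((LinearMap.mul K B).compl₁₂ (ψ.flip (a 0)) (prodPair k (a ∘ Fin.succ)))

/-- `c₁ ⊗ (⋯ ⊗ (cₖ ⊗ d)) ↦ ψ c₁ a₁ • (ψ c₂ a₂ • (⋯ • φ d m))`. -/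
noncomputable def modPair : (k : ℕ) → (Fin k → A) → M → (TD K C D k →ₗ[K] N)
  | 0, _, m => φ.flip m
  | (k+1), a, m => TensorProduct.lift
      ((lsmulKB K B N).compl₁₂ (ψ.flip (a 0)) (modPair k (a ∘ Fin.succ) m))

/-- Prepending a factor to a tensor power of `B`, as a `K`-bilinear map. -/
noncomputable def tprodCons (k : ℕ) :
    B →ₗ[K] (⨂[K] (_ : Fin k), B) →ₗ[K] (⨂[K] (_ : Fin (k+1)), B) :=
  (PiTensorProduct.lift).toLinearMap ∘ₗ
    (PiTensorProduct.tprod K (s := fun _ : Fin (k+1) => B)).curryLeft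

/-- `c₁ ⊗ (⋯ ⊗ (cₖ ⊗ d)) ↦ φ d m ⊗ ψ c₁ a₁ ⊗ ⋯ ⊗ ψ cₖ aₖ` : applied to the iterated
coaction of `t`, this produces the Sweedler-type chain-level expression
`Σ φ t₍₀₎ m ⊗ ψ t₍₁₎ a₁ ⊗ ⋯ ⊗ ψ t₍ₖ₎ aₖ` of a comodule measuring. -/
noncomputable def measurePair : (k : ℕ) → M → (Fin k → A) →
    (TD K C D k →ₗ[K] N ⊗[K] (⨂[K] (_ : Fin k), B))
  | 0, m, _ =>
      (TensorProduct.mk K N (⨂[K] (_ : Fin 0), B)).flip (tprod K (fun _ : Fin 0 => (1:B)))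
        ∘ₗ (φ.flip m)
  | (k+1), m, a => TensorProduct.lift <|
      ((LinearMap.llcomp K (TD K C D k) (N ⊗[K] (⨂[K] (_ : Fin k), B))
          (N ⊗[K] (⨂[K] (_ : Fin (k+1)), B))).flip (measurePair k m (a ∘ Fin.succ))) ∘ₗ
        ((TensorProduct.mapBilinear (RingHom.id K) N (⨂[K] (_ : Fin k), B) N (⨂[K] (_ : Fin (k+1)), B)
            LinearMap.id) ∘ₗ (tprodCons K B k) ∘ₗ (ψ.flip (a 0)))

end ComodMeasuring

section Loday

variable (K A M : Type) [Field K] [CommRing A] [Algebra K A]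
variable [AddCommGroup M] [Module K M] [Module A M] [IsScalarTower K A M] [SMulCommClass K A M]

/-- The `k`-th term `M ⊗ A^{⊗k}` of the Loday `Γ`-module `L(A,M)`. -/
abbrev Lob (k : ℕ) : Type := M ⊗[K] (⨂[K] (_ : Fin k), A)

/-- The value of the Loday map `L(A,M)(f)` on the pure tensor `m ⊗ a₁ ⊗ ⋯ ⊗ aₖ`, namely
`(m • ∏_{i ∈ f⁻¹(0), i ≠ 0} aᵢ) ⊗ (∏_{i ∈ f⁻¹(1)} aᵢ) ⊗ ⋯ ⊗ (∏_{i ∈ f⁻¹(l)} aᵢ)`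
(empty products are `1`). -/
noncomputable def lodayElt {k l : ℕ} (f : GammaHom k l) (m : M) (a : Fin k → A) :
    Lob K A M l :=
  ((∏ i ∈ fiber0 f, a i) • m) ⊗ₜ[K] tprod K (fun j => ∏ i ∈ fiber f j, a i)

/-- The Loday `Γ`-module `L(A,M) : Γ ⥤ Vect_K`, assembled from a family of linear maps
satisfying the functoriality equations. -/
noncomputable def lodayFunctorOf
    (F : ∀ k l : ℕ, GammaHom k l → (Lob K A M k →ₗ[K] Lob K A M l))
    (hFid : ∀ k, F k k (GammaHom.id k) = LinearMap.id)
    (hFcomp : ∀ (k l p : ℕ) (f : GammaHom k l) (g : GammaHom l p),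
      F k p (g.comp f) = (F l p g) ∘ₗ (F k l f)) :
    GammaCat ⥤ ModuleCat.{0} K where
  obj a := ModuleCat.of K (Lob K A M a.len)
  map {a b} f := ModuleCat.ofHom (F a.len b.len f)
  map_id a := ModuleCat.hom_ext (hFid a.len)
  map_comp {a b c} f g := ModuleCat.hom_ext (hFcomp a.len b.len c.len f g)

end Loday

section HH

variable (K : Type) [Field K]

/-- The simplicial vector space `R̃(Y_•)` associated to a `Γ`-module `R` and a pointed
simplicial set `Y`, where `R̃ : Sets_⋆ ⥤ Vect_K` is the left Kan extension of `R` along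
the inclusion `Γ → Sets_⋆`. -/
noncomputable def simplicialExt (L : GammaCat ⥤ ModuleCat.{0} K)
    (Y : SimplexCategoryᵒᵖ ⥤ Pointed.{0}) : SimplicialObject (ModuleCat.{0} K) :=
  Y ⋙ (gammaToPointed.lan).obj L

/-- The homology `H_n(R̃(Y_•))` of the simplicial vector space `R̃(Y_•)` (computed via the
Moore / alternating face map complex).  For `R = L(A,M)` this is the higher order
Hochschild homology `HH_n^Y(A,M)` of order `Y`. -/
noncomputable def hh (L : GammaCat ⥤ ModuleCat.{0} K)
    (Y : SimplexCategoryᵒᵖ ⥤ Pointed.{0}) (n : ℕ) : ModuleCat.{0} K :=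
  ((AlgebraicTopology.alternatingFaceMapComplex (ModuleCat.{0} K)).obj
    (simplicialExt K L Y)).homology n

/-- The map induced on `H_n(R̃(Y_•))` by a morphism of `Γ`-modules `η : R ⟶ R'`. -/
noncomputable def hhMapOfNat {L L' : GammaCat ⥤ ModuleCat.{0} K} (η : L ⟶ L')
    (Y : SimplexCategoryᵒᵖ ⥤ Pointed.{0}) (n : ℕ) : hh K L Y n ⟶ hh K L' Y n :=
  HomologicalComplex.homologyMap
    ((AlgebraicTopology.alternatingFaceMapComplex (ModuleCat.{0} K)).map
      (CategoryTheory.Functor.whiskerLeft Y ((gammaToPointed.lan).map η))) n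

/-- The map induced on `H_n(R̃(Y_•))` by a map of pointed simplicial sets `g : Y ⟶ Z`. -/
noncomputable def hhMapOfSimplicial (L : GammaCat ⥤ ModuleCat.{0} K)
    {Y Z : SimplexCategoryᵒᵖ ⥤ Pointed.{0}} (g : Y ⟶ Z) (n : ℕ) :
    hh K L Y n ⟶ hh K L Z n :=
  HomologicalComplex.homologyMap
    ((AlgebraicTopology.alternatingFaceMapComplex (ModuleCat.{0} K)).map
      (CategoryTheory.Functor.whiskerRight g ((gammaToPointed.lan).obj L))) n

end HH

/-! ### Auxiliary development for the proof -/

namespace MeasuringProof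

section Dev
set_option linter.unusedSectionVars false
set_option linter.deprecated false

variable {K A B C D M N : Type} [Field K]
    [CommRing A] [Algebra K A] [CommRing B] [Algebra K B]
    [AddCommGroup C] [Module K C] [Coalgebra K C]
    [AddCommGroup D] [Module K D]
    [AddCommGroup M] [Module K M] [Module A M] [IsScalarTower K A M] [SMulCommClass K A M]
    [AddCommGroup N] [Module K N] [Module B N] [IsScalarTower K B N] [SMulCommClass K B N]

/-- Extensionality for linear maps out of `Lob K B N k`. -/
lemma lob_ext {k : ℕ} {V : Type} [AddCommGroup V] [Module K V]
    {f g : Lob K B N k →ₗ[K] V}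
    (h : ∀ (n : N) (b : Fin k → B), f (n ⊗ₜ[K] tprod K b) = g (n ⊗ₜ[K] tprod K b)) :
    f = g := by
  apply TensorProduct.ext
  apply LinearMap.ext; intro n
  apply PiTensorProduct.ext
  apply MultilinearMap.ext; intro b
  simpa using h n b

/-- Extensionality for linear maps out of `Lob K A M k`. -/
lemma lobA_ext {k : ℕ} {V : Type} [AddCommGroup V] [Module K V]
    {f g : Lob K A M k →ₗ[K] V}
    (h : ∀ (m : M) (a : Fin k → A), f (m ⊗ₜ[K] tprod K a) = g (m ⊗ₜ[K] tprod K a)) :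
    f = g := by
  apply TensorProduct.ext
  apply LinearMap.ext; intro m
  apply PiTensorProduct.ext
  apply MultilinearMap.ext; intro a
  simpa using h m a

@[simp] lemma tprodCons_tprod (k : ℕ) (b : B) (bs : Fin k → B) :
    tprodCons K B k b (tprod K bs) = PiTensorProduct.tprod K (Fin.cons b bs) := by
  simp [tprodCons, MultilinearMap.curryLeft_apply]

/-- `n ↦ n ⊗ (1 ⊗ ⋯ ⊗ 1)`. -/
noncomputable def W (l : ℕ) : N →ₗ[K] Lob K B N l :=
  (TensorProduct.mk K N _).flip (tprod K fun _ : Fin l => (1 : B))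

@[simp] lemma W_apply (l : ℕ) (n : N) :
    (W l : N →ₗ[K] Lob K B N l) n = n ⊗ₜ[K] tprod K (fun _ => (1 : B)) := rfl

/-- Prepend a tensor factor, on `Lob`. -/
noncomputable def insL (k : ℕ) : B →ₗ[K] Lob K B N k →ₗ[K] Lob K B N (k+1) :=
  (TensorProduct.mapBilinear (RingHom.id K) N (⨂[K] (_ : Fin k), B) N (⨂[K] (_ : Fin (k+1)), B)
      LinearMap.id) ∘ₗ tprodCons K B k

@[simp] lemma insL_tmul (k : ℕ) (b : B) (n : N) (x : ⨂[K] (_ : Fin k), B) :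
    (insL k : B →ₗ[K] Lob K B N k →ₗ[K] Lob K B N (k+1)) b (n ⊗ₜ[K] x) =
      n ⊗ₜ[K] tprodCons K B k b x := by
  simp [insL]

/-- Act on the module factor, on `Lob`. -/
noncomputable def actL (l : ℕ) : B →ₗ[K] Lob K B N l →ₗ[K] Lob K B N l :=
  ((TensorProduct.mapBilinear (RingHom.id K) N (⨂[K] (_ : Fin l), B) N (⨂[K] (_ : Fin l), B)).flip
      LinearMap.id) ∘ₗ lsmulKB K B N

@[simp] lemma actL_tmul (l : ℕ) (b : B) (n : N) (x : ⨂[K] (_ : Fin l), B) :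
    (actL l : B →ₗ[K] Lob K B N l →ₗ[K] Lob K B N l) b (n ⊗ₜ[K] x) = (b • n) ⊗ₜ[K] x := by
  simp [actL, lsmulKB]

/-- Multiply the `j`-th tensor slot on the left, as a linear map in the multiplier. -/
noncomputable def mulAtP (l : ℕ) (j : Fin l) :
    B →ₗ[K] (⨂[K] (_ : Fin l), B) →ₗ[K] ⨂[K] (_ : Fin l), B where
  toFun b := PiTensorProduct.map (Function.update (fun _ => LinearMap.id) j (LinearMap.mulLeft K b))
  map_add' b b' := by
    apply PiTensorProduct.ext
    apply MultilinearMap.ext; intro x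
    have h : ∀ (c : B), (fun i => Function.update (fun _ => (LinearMap.id : B →ₗ[K] B)) j
        (LinearMap.mulLeft K c) i (x i)) = Function.update x j (c * x j) := by
      intro c; funext i
      rcases eq_or_ne i j with rfl | hij
      · simp
      · simp [Function.update_of_ne hij]
    simp only [LinearMap.compMultilinearMap_apply, LinearMap.add_apply,
      PiTensorProduct.map_tprod, h]
    rw [add_mul]
    exact MultilinearMap.map_update_add _ x j (b * x j) (b' * x j)
  map_smul' r b := by
    apply PiTensorProduct.ext
    apply MultilinearMap.ext; intro x
    have h : ∀ (c : B), (fun i => Function.update (fun _ => (LinearMap.id : B →ₗ[K] B)) j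
        (LinearMap.mulLeft K c) i (x i)) = Function.update x j (c * x j) := by
      intro c; funext i
      rcases eq_or_ne i j with rfl | hij
      · simp
      · simp [Function.update_of_ne hij]
    simp only [LinearMap.compMultilinearMap_apply, LinearMap.smul_apply,
      PiTensorProduct.map_tprod, h, RingHom.id_apply]
    rw [smul_mul_assoc]
    exact MultilinearMap.map_update_smul _ x j r (b * x j)

@[simp] lemma mulAtP_tprod (l : ℕ) (j : Fin l) (b : B) (bs : Fin l → B) :
    mulAtP l j b (tprod K bs) = tprod K (Function.update bs j (b * bs j)) := by
  have h : (fun i => Function.update (fun _ => (LinearMap.id : B →ₗ[K] B)) j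
      (LinearMap.mulLeft K b) i (bs i)) = Function.update bs j (b * bs j) := by
    funext i
    rcases eq_or_ne i j with rfl | hij
    · simp
    · simp [Function.update_of_ne hij]
  simp [mulAtP, h]

/-- Multiply the `j`-th tensor slot, on `Lob`. -/
noncomputable def mulAtL (l : ℕ) (j : Fin l) : B →ₗ[K] Lob K B N l →ₗ[K] Lob K B N l :=
  (TensorProduct.mapBilinear (RingHom.id K) N (⨂[K] (_ : Fin l), B) N (⨂[K] (_ : Fin l), B)
      LinearMap.id) ∘ₗ mulAtP l j

@[simp] lemma mulAtL_tmul (l : ℕ) (j : Fin l) (b : B) (n : N) (x : ⨂[K] (_ : Fin l), B) :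
    (mulAtL l j : B →ₗ[K] Lob K B N l →ₗ[K] Lob K B N l) b (n ⊗ₜ[K] x) =
      n ⊗ₜ[K] mulAtP l j b x := by
  simp [mulAtL]

section Ops

variable (ψ : C →ₗ[K] A →ₗ[K] B) (ρ : CoactionStruct K C D) (φ : D →ₗ[K] M →ₗ[K] N)

/-- `t ↦ Σ Op (ψ t₍₀₎ x) (E t₍₁₎)` over the coaction of `t`. -/
noncomputable def liftOp {U W : Type} [AddCommGroup U] [Module K U] [AddCommGroup W] [Module K W]
    (Op : B →ₗ[K] U →ₗ[K] W) (x : A) (E : D →ₗ[K] U) : D →ₗ[K] W :=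
  TensorProduct.lift (((LinearMap.llcomp K D U W).flip E) ∘ₗ Op ∘ₗ ψ.flip x) ∘ₗ ρ.δ

variable {U V V' W W' : Type} [AddCommGroup U] [Module K U] [AddCommGroup V] [Module K V]
  [AddCommGroup V'] [Module K V'] [AddCommGroup W] [Module K W] [AddCommGroup W'] [Module K W']

lemma lift_add' (f g : U →ₗ[K] V →ₗ[K] W) :
    TensorProduct.lift (f + g) = TensorProduct.lift f + TensorProduct.lift g := by
  apply TensorProduct.ext'; intros; simp

lemma lift_smul' (r : K) (f : U →ₗ[K] V →ₗ[K] W) :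
    TensorProduct.lift (r • f) = r • TensorProduct.lift f := by
  apply TensorProduct.ext'; intros; simp

lemma liftOp_x_add (Op : B →ₗ[K] U →ₗ[K] W) (x y : A) (E : D →ₗ[K] U) :
    liftOp ψ ρ Op (x + y) E = liftOp ψ ρ Op x E + liftOp ψ ρ Op y E := by
  simp only [liftOp, map_add, LinearMap.comp_add, LinearMap.add_comp, lift_add']

lemma liftOp_x_smul (Op : B →ₗ[K] U →ₗ[K] W) (r : K) (x : A) (E : D →ₗ[K] U) :
    liftOp ψ ρ Op (r • x) E = r • liftOp ψ ρ Op x E := by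
  simp only [liftOp, map_smul, LinearMap.comp_smul, LinearMap.smul_comp, lift_smul']

lemma liftOp_E_add (Op : B →ₗ[K] U →ₗ[K] W) (x : A) (E E' : D →ₗ[K] U) :
    liftOp ψ ρ Op x (E + E') = liftOp ψ ρ Op x E + liftOp ψ ρ Op x E' := by
  simp only [liftOp, map_add, LinearMap.comp_add, LinearMap.add_comp, lift_add']

lemma liftOp_E_smul (Op : B →ₗ[K] U →ₗ[K] W) (r : K) (x : A) (E : D →ₗ[K] U) :
    liftOp ψ ρ Op x (r • E) = r • liftOp ψ ρ Op x E := by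
  simp only [liftOp, map_smul, LinearMap.comp_smul, LinearMap.smul_comp, lift_smul']

/-- Head comultiplication `c ⊗ v ↦ Δc ⊗ v` (reassociated). -/
noncomputable def Sg (V : Type) [AddCommGroup V] [Module K V] :
    C ⊗[K] V →ₗ[K] C ⊗[K] (C ⊗[K] V) :=
  (TensorProduct.assoc K C C V).toLinearMap ∘ₗ
    (Coalgebra.comul (R := K) (A := C)).rTensor V

lemma Sg_nat (f : V →ₗ[K] W') :
    Sg (K := K) (C := C) W' ∘ₗ LinearMap.lTensor C f
      = LinearMap.lTensor C (LinearMap.lTensor C f) ∘ₗ Sg (K := K) (C := C) V := by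
  apply TensorProduct.ext'; intro c v
  have h : (TensorProduct.assoc K C C W').toLinearMap ∘ₗ
        (TensorProduct.mk K (C ⊗[K] C) W').flip (f v)
      = LinearMap.lTensor C (LinearMap.lTensor C f) ∘ₗ
        (TensorProduct.assoc K C C V).toLinearMap ∘ₗ (TensorProduct.mk K (C ⊗[K] C) V).flip v := by
    apply TensorProduct.ext'; intro x y
    simp
  have h' := LinearMap.congr_fun h (Coalgebra.comul (R := K) c)
  simp only [LinearMap.comp_apply, LinearMap.flip_apply, TensorProduct.mk_apply] at h'
  simp only [LinearMap.comp_apply, LinearMap.lTensor_tmul, Sg, LinearMap.rTensor_tmul]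
  exact h'

/-- Swap the two outer `C`-factors of `C ⊗ (C ⊗ V)`. -/
noncomputable def swapHead (V : Type) [AddCommGroup V] [Module K V] :
    C ⊗[K] (C ⊗[K] V) →ₗ[K] C ⊗[K] (C ⊗[K] V) :=
  (TensorProduct.assoc K C C V).toLinearMap ∘ₗ
    ((TensorProduct.comm K C C).toLinearMap.rTensor V) ∘ₗ
      (TensorProduct.assoc K C C V).symm.toLinearMap

@[simp] lemma swapHead_tmul (c c' : C) (v : V) :
    swapHead (K := K) (C := C) V (c ⊗ₜ[K] (c' ⊗ₜ[K] v)) = c' ⊗ₜ[K] (c ⊗ₜ[K] v) := by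
  simp [swapHead]

lemma coactIter_succ (k : ℕ) :
    coactIter K C D ρ (k + 1)
      = LinearMap.lTensor C (coactIter K C D ρ k) ∘ₗ ρ.δ := by
  induction k with
  | zero =>
      show comulIterTail K C D 0 ∘ₗ ρ.δ = _
      rw [show comulIterTail K C D 0 = LinearMap.id from rfl,
        show coactIter K C D ρ 0 = LinearMap.id from rfl]
      exact congrArg (fun g => g ∘ₗ ρ.δ) (LinearMap.lTensor_id (R := K) (M := C) (N := D)).symm
  | succ k ih =>
      have h1 : coactIter K C D ρ (k + 2)
          = Sg (K := K) (C := C) (TD K C D k) ∘ₗ coactIter K C D ρ (k + 1) := rfl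
      rw [h1, ih, ← LinearMap.comp_assoc, Sg_nat (K := K) (C := C) (coactIter K C D ρ k)]
      have h2 : Sg (K := K) (C := C) D ∘ₗ ρ.δ = LinearMap.lTensor C ρ.δ ∘ₗ ρ.δ := by
        rw [Sg, LinearMap.comp_assoc]
        exact ρ.coassoc
      rw [LinearMap.comp_assoc, h2, ← LinearMap.comp_assoc, ← LinearMap.lTensor_comp, ← ih]
      rfl

lemma swap_coact (hco : IsCocommutative K C) :
    swapHead (K := K) (C := C) D ∘ₗ (LinearMap.lTensor C ρ.δ ∘ₗ ρ.δ)
      = LinearMap.lTensor C ρ.δ ∘ₗ ρ.δ := by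
  rw [← ρ.coassoc]
  have h1 : swapHead (K := K) (C := C) D ∘ₗ (TensorProduct.assoc K C C D).toLinearMap
      = (TensorProduct.assoc K C C D).toLinearMap ∘ₗ
          ((TensorProduct.comm K C C).toLinearMap.rTensor D) := by
    apply TensorProduct.ext_threefold; intro x y z
    simp
  calc swapHead (K := K) (C := C) D ∘ₗ ((TensorProduct.assoc K C C D).toLinearMap ∘ₗ
          (Coalgebra.comul (R := K)).rTensor D ∘ₗ ρ.δ)
      = (swapHead (K := K) (C := C) D ∘ₗ (TensorProduct.assoc K C C D).toLinearMap) ∘ₗ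
          (Coalgebra.comul (R := K)).rTensor D ∘ₗ ρ.δ := by
        rw [LinearMap.comp_assoc]
    _ = (TensorProduct.assoc K C C D).toLinearMap ∘ₗ
          (((TensorProduct.comm K C C).toLinearMap.rTensor D) ∘ₗ
            (Coalgebra.comul (R := K)).rTensor D) ∘ₗ ρ.δ := by
        rw [h1]; rw [LinearMap.comp_assoc, LinearMap.comp_assoc]
    _ = (TensorProduct.assoc K C C D).toLinearMap ∘ₗ
          (Coalgebra.comul (R := K)).rTensor D ∘ₗ ρ.δ := by
        rw [← LinearMap.rTensor_comp, hco]

end Ops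
section Core

variable (ψ : C →ₗ[K] A →ₗ[K] B) (ρ : CoactionStruct K C D) (φ : D →ₗ[K] M →ₗ[K] N)
variable {U V V' W : Type} [AddCommGroup U] [Module K U] [AddCommGroup V] [Module K V]
  [AddCommGroup V'] [Module K V'] [AddCommGroup W] [Module K W]

/-- Unfolding a nested `liftOp` over the iterated coaction. -/
lemma liftOp_nest (Op₂ : B →ₗ[K] V →ₗ[K] W) (x : A) (B₁ : C →ₗ[K] D →ₗ[K] V) :
    liftOp ψ ρ Op₂ x (TensorProduct.lift B₁ ∘ₗ ρ.δ)
      = TensorProduct.lift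
          ((LinearMap.llcomp K (C ⊗[K] D) V W).flip (TensorProduct.lift B₁) ∘ₗ Op₂ ∘ₗ ψ.flip x)
          ∘ₗ (LinearMap.lTensor C ρ.δ ∘ₗ ρ.δ) := by
  have key : TensorProduct.lift
        (((LinearMap.llcomp K D V W).flip (TensorProduct.lift B₁ ∘ₗ ρ.δ)) ∘ₗ Op₂ ∘ₗ ψ.flip x)
      = TensorProduct.lift
          ((LinearMap.llcomp K (C ⊗[K] D) V W).flip (TensorProduct.lift B₁) ∘ₗ Op₂ ∘ₗ ψ.flip x)
        ∘ₗ LinearMap.lTensor C ρ.δ := by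
    apply TensorProduct.ext'; intro c d
    simp [TensorProduct.lift.tmul]
  rw [liftOp, key, LinearMap.comp_assoc]

/-- Two successive `liftOp`s commute, given commuting operations (uses cocommutativity). -/
lemma liftOp_swap (hco : IsCocommutative K C)
    (Op₁ : B →ₗ[K] U →ₗ[K] V) (Op₂ : B →ₗ[K] V →ₗ[K] W)
    (Op₂' : B →ₗ[K] U →ₗ[K] V') (Op₁' : B →ₗ[K] V' →ₗ[K] W)
    (hcomm : ∀ b b', Op₂ b ∘ₗ Op₁ b' = Op₁' b' ∘ₗ Op₂' b)
    (x x' : A) (E : D →ₗ[K] U) :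
    liftOp ψ ρ Op₂ x (liftOp ψ ρ Op₁ x' E) = liftOp ψ ρ Op₁' x' (liftOp ψ ρ Op₂' x E) := by
  rw [show liftOp ψ ρ Op₁ x' E = TensorProduct.lift
      (((LinearMap.llcomp K D U V).flip E) ∘ₗ Op₁ ∘ₗ ψ.flip x') ∘ₗ ρ.δ from rfl,
    show liftOp ψ ρ Op₂' x E = TensorProduct.lift
      (((LinearMap.llcomp K D U V').flip E) ∘ₗ Op₂' ∘ₗ ψ.flip x) ∘ₗ ρ.δ from rfl,
    liftOp_nest, liftOp_nest]
  have key : TensorProduct.lift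
        ((LinearMap.llcomp K (C ⊗[K] D) V W).flip
            (TensorProduct.lift (((LinearMap.llcomp K D U V).flip E) ∘ₗ Op₁ ∘ₗ ψ.flip x'))
          ∘ₗ Op₂ ∘ₗ ψ.flip x)
      = TensorProduct.lift
          ((LinearMap.llcomp K (C ⊗[K] D) V' W).flip
              (TensorProduct.lift (((LinearMap.llcomp K D U V').flip E) ∘ₗ Op₂' ∘ₗ ψ.flip x))
            ∘ₗ Op₁' ∘ₗ ψ.flip x')
        ∘ₗ swapHead (K := K) (C := C) D := by
    apply TensorProduct.ext'; intro c w
    induction w using TensorProduct.induction_on with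
    | zero => simp
    | add u v hu hv =>
        simp only [TensorProduct.tmul_add, map_add] at hu hv ⊢
        rw [hu, hv]
    | tmul c' d =>
        simp only [LinearMap.comp_apply, swapHead_tmul, TensorProduct.lift.tmul,
          LinearMap.flip_apply, LinearMap.llcomp_apply]
        exact LinearMap.congr_fun (hcomm _ _) (E d)
  rw [key, LinearMap.comp_assoc, swap_coact ρ hco]

/-- Two successive `liftOp`s merge into one, given composable operations
(uses the measuring property). -/
lemma liftOp_merge (hψm : IsMeasuring K A B C ψ)
    (Op₁ : B →ₗ[K] U →ₗ[K] V) (Op₂ : B →ₗ[K] V →ₗ[K] W) (Op₃ : B →ₗ[K] U →ₗ[K] W)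
    (hcomp : ∀ b b', Op₂ b ∘ₗ Op₁ b' = Op₃ (b * b'))
    (x x' : A) (E : D →ₗ[K] U) :
    liftOp ψ ρ Op₂ x (liftOp ψ ρ Op₁ x' E) = liftOp ψ ρ Op₃ (x * x') E := by
  rw [show liftOp ψ ρ Op₁ x' E = TensorProduct.lift
      (((LinearMap.llcomp K D U V).flip E) ∘ₗ Op₁ ∘ₗ ψ.flip x') ∘ₗ ρ.δ from rfl,
    liftOp_nest, ← ρ.coassoc]
  have key : TensorProduct.lift
        ((LinearMap.llcomp K (C ⊗[K] D) V W).flip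
            (TensorProduct.lift (((LinearMap.llcomp K D U V).flip E) ∘ₗ Op₁ ∘ₗ ψ.flip x'))
          ∘ₗ Op₂ ∘ₗ ψ.flip x)
        ∘ₗ ((TensorProduct.assoc K C C D).toLinearMap ∘ₗ
            (Coalgebra.comul (R := K)).rTensor D)
      = TensorProduct.lift (((LinearMap.llcomp K D U W).flip E) ∘ₗ Op₃ ∘ₗ ψ.flip (x * x')) := by
    apply TensorProduct.ext'; intro s d
    have hd : TensorProduct.lift
          ((LinearMap.llcomp K (C ⊗[K] D) V W).flip
              (TensorProduct.lift (((LinearMap.llcomp K D U V).flip E) ∘ₗ Op₁ ∘ₗ ψ.flip x'))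
            ∘ₗ Op₂ ∘ₗ ψ.flip x)
          ∘ₗ (TensorProduct.assoc K C C D).toLinearMap ∘ₗ (TensorProduct.mk K (C ⊗[K] C) D).flip d
        = LinearMap.applyₗ d ∘ₗ ((LinearMap.llcomp K D U W).flip E) ∘ₗ Op₃ ∘ₗ
            TensorProduct.lift ((LinearMap.mul K B).compl₁₂ (ψ.flip x) (ψ.flip x')) := by
      apply TensorProduct.ext'; intro c c'
      simp only [LinearMap.comp_apply, LinearMap.flip_apply, TensorProduct.mk_apply,
        TensorProduct.assoc_tmul, TensorProduct.lift.tmul, LinearMap.llcomp_apply,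
        LinearMap.compl₁₂_apply, LinearMap.mul_apply']
      have := LinearMap.congr_fun (hcomp (ψ c x) (ψ c' x')) (E d)
      exact this
    have h2 := LinearMap.congr_fun hd (Coalgebra.comul (R := K) s)
    simp only [LinearMap.comp_apply, LinearMap.flip_apply, TensorProduct.mk_apply] at h2
    simp only [LinearMap.comp_apply, LinearMap.rTensor_tmul]
    rw [h2, ← hψm.measures_mul s x x']
    simp [TensorProduct.lift.tmul, LinearMap.applyₗ]
    rfl
  apply LinearMap.ext; intro t
  have h3 := LinearMap.congr_fun key (ρ.δ t)
  simp only [LinearMap.comp_apply] at h3 ⊢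
  exact h3

/-- `liftOp` at `1 : A` collapses by counitality. -/
lemma liftOp_one (hψm : IsMeasuring K A B C ψ) (Op : B →ₗ[K] U →ₗ[K] W) (E : D →ₗ[K] U) :
    liftOp ψ ρ Op (1 : A) E = Op 1 ∘ₗ E := by
  have h1 : ψ.flip (1 : A) = LinearMap.toSpanSingleton K B 1 ∘ₗ
      (Coalgebra.counit : C →ₗ[K] K) := by
    apply LinearMap.ext; intro c
    simp [hψm.measures_one c, LinearMap.toSpanSingleton_apply]
  rw [liftOp, h1]
  have h2 : TensorProduct.lift (((LinearMap.llcomp K D U W).flip E) ∘ₗ Op ∘ₗ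
        LinearMap.toSpanSingleton K B 1 ∘ₗ (Coalgebra.counit : C →ₗ[K] K))
      = TensorProduct.lift (((LinearMap.llcomp K D U W).flip E) ∘ₗ Op ∘ₗ
          LinearMap.toSpanSingleton K B 1) ∘ₗ
        (Coalgebra.counit : C →ₗ[K] K).rTensor D := by
    apply TensorProduct.ext'; intro c d
    simp [TensorProduct.lift.tmul]
  rw [h2, LinearMap.comp_assoc, ρ.rTensor_counit_comp_coaction]
  apply LinearMap.ext; intro t
  simp [TensorProduct.lift.tmul, LinearMap.toSpanSingleton_apply]

/-- Postcomposition pushes through `liftOp` along intertwining operations. -/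
lemma liftOp_push (Op : B →ₗ[K] U →ₗ[K] V) (Op' : B →ₗ[K] V' →ₗ[K] W)
    (T : V →ₗ[K] W) (T' : U →ₗ[K] V')
    (h : ∀ b, T ∘ₗ Op b = Op' b ∘ₗ T') (x : A) (E : D →ₗ[K] U) :
    T ∘ₗ liftOp ψ ρ Op x E = liftOp ψ ρ Op' x (T' ∘ₗ E) := by
  have key : T ∘ₗ TensorProduct.lift (((LinearMap.llcomp K D U V).flip E) ∘ₗ Op ∘ₗ ψ.flip x)
      = TensorProduct.lift (((LinearMap.llcomp K D V' W).flip (T' ∘ₗ E)) ∘ₗ Op' ∘ₗ ψ.flip x) := by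
    apply TensorProduct.ext'; intro c d
    simp only [LinearMap.comp_apply, TensorProduct.lift.tmul, LinearMap.flip_apply,
      LinearMap.llcomp_apply]
    exact LinearMap.congr_fun (h (ψ c x)) (E d)
  rw [liftOp, liftOp, ← LinearMap.comp_assoc, key]
end Core
section EL

variable (ψ : C →ₗ[K] A →ₗ[K] B) (ρ : CoactionStruct K C D) (φ : D →ₗ[K] M →ₗ[K] N)

lemma measurePair_zero (m : M) (a : Fin 0 → A) :
    measurePair K A B C D M N ψ φ 0 m a = (W 0 : N →ₗ[K] Lob K B N 0) ∘ₗ φ.flip m := rfl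

lemma measurePair_succ_tmul (k : ℕ) (m : M) (a : Fin (k+1) → A) (c : C) (z : TD K C D k) :
    measurePair K A B C D M N ψ φ (k+1) m a (c ⊗ₜ[K] z)
      = insL k (ψ c (a 0)) (measurePair K A B C D M N ψ φ k m (a ∘ Fin.succ) z) := rfl

/-- The Sweedler chain map `t ↦ Σ φ t₍₀₎ m ⊗ ψ t₍₁₎ a₁ ⊗ ⋯` as a linear map in `t`. -/
noncomputable def EL (k : ℕ) (m : M) (a : Fin k → A) : D →ₗ[K] Lob K B N k :=
  measurePair K A B C D M N ψ φ k m a ∘ₗ coactIter K C D ρ k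

lemma EL_zero (m : M) (a : Fin 0 → A) :
    EL ψ ρ φ 0 m a = (W 0 : N →ₗ[K] Lob K B N 0) ∘ₗ φ.flip m := by
  rw [EL, measurePair_zero]
  rfl

lemma EL_succ (k : ℕ) (m : M) (a : Fin (k+1) → A) :
    EL ψ ρ φ (k+1) m a = liftOp ψ ρ (insL k) (a 0) (EL ψ ρ φ k m (a ∘ Fin.succ)) := by
  rw [EL, coactIter_succ, liftOp, ← LinearMap.comp_assoc]
  show (measurePair K A B C D M N ψ φ (k + 1) m a ∘ₗ
      LinearMap.lTensor C (coactIter K C D ρ k)) ∘ₗ ρ.δ = _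
  refine congrArg (fun g : C ⊗[K] D →ₗ[K] Lob K B N (k+1) => g ∘ₗ ρ.δ) ?_
  apply TensorProduct.ext'; intro c d
  simp only [LinearMap.comp_apply, TensorProduct.lift.tmul, LinearMap.flip_apply,
    LinearMap.llcomp_apply, EL]
  exact measurePair_succ_tmul ψ φ k m a c (coactIter K C D ρ k d)

lemma actL_insL (l : ℕ) (b b' : B) :
    (actL (l+1) : B →ₗ[K] Lob K B N (l+1) →ₗ[K] Lob K B N (l+1)) b ∘ₗ (insL l) b'
      = (insL l) b' ∘ₗ (actL l) b := by
  apply lob_ext; intro n bs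
  simp

lemma mulAt0_insL (l : ℕ) (b b' : B) :
    (mulAtL (l+1) 0 : B →ₗ[K] Lob K B N (l+1) →ₗ[K] Lob K B N (l+1)) b ∘ₗ (insL l) b'
      = (insL l) (b * b') := by
  apply lob_ext; intro n bs
  simp [Fin.update_cons_zero]

lemma mulAtSucc_insL (l : ℕ) (j : Fin l) (b b' : B) :
    (mulAtL (l+1) j.succ : B →ₗ[K] Lob K B N (l+1) →ₗ[K] Lob K B N (l+1)) b ∘ₗ (insL l) b'
      = (insL l) b' ∘ₗ (mulAtL l j) b := by
  apply lob_ext; intro n bs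
  simp [← Fin.cons_update]

lemma EL_one (hψm : IsMeasuring K A B C ψ) (l : ℕ) (m : M) :
    EL ψ ρ φ l m (fun _ => (1 : A)) = (W l : N →ₗ[K] Lob K B N l) ∘ₗ φ.flip m := by
  induction l with
  | zero => exact EL_zero ψ ρ φ m _
  | succ l ih =>
      rw [EL_succ, show ((fun _ : Fin (l+1) => (1:A)) ∘ Fin.succ) = fun _ : Fin l => (1:A)
          from rfl, ih, liftOp_one ψ ρ hψm]
      have h : (insL l : B →ₗ[K] Lob K B N l →ₗ[K] Lob K B N (l+1)) 1 ∘ₗ (W l : N →ₗ[K] _)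
          = (W (l+1) : N →ₗ[K] Lob K B N (l+1)) := by
        apply LinearMap.ext; intro n
        simp only [LinearMap.comp_apply, W_apply, insL_tmul, tprodCons_tprod]
        have hc : Fin.cons (1:B) (fun _ : Fin l => (1:B)) = fun _ : Fin (l+1) => (1:B) := by
          funext i
          cases i using Fin.cases <;> simp
        rw [hc]
      rw [← LinearMap.comp_assoc, h]

lemma liftOp_actL (hco : IsCocommutative K C) (hφm : IsComodMeasuring K A B C D M N ψ ρ φ)
    (l : ℕ) (x : A) (m : M) (a : Fin l → A) :
    liftOp ψ ρ (actL l) x (EL ψ ρ φ l m a) = EL ψ ρ φ l (x • m) a := by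
  induction l generalizing m with
  | zero =>
      rw [EL_zero, EL_zero]
      have hm : (φ.flip (x • m) : D →ₗ[K] N)
          = TensorProduct.lift ((lsmulKB K B N).compl₁₂ (ψ.flip x) (φ.flip m)) ∘ₗ ρ.δ :=
        LinearMap.ext fun t => hφm.measures t x m
      have key : TensorProduct.lift (((LinearMap.llcomp K D (Lob K B N 0) (Lob K B N 0)).flip
            ((W 0 : N →ₗ[K] Lob K B N 0) ∘ₗ φ.flip m)) ∘ₗ (actL 0) ∘ₗ ψ.flip x)
          = (W 0 : N →ₗ[K] Lob K B N 0) ∘ₗ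
              TensorProduct.lift ((lsmulKB K B N).compl₁₂ (ψ.flip x) (φ.flip m)) := by
        apply TensorProduct.ext'; intro c d
        simp [TensorProduct.lift.tmul, lsmulKB]
      rw [liftOp, key, LinearMap.comp_assoc, ← hm]
  | succ l ih =>
      rw [EL_succ, EL_succ,
        liftOp_swap ψ ρ hco (insL l) (actL (l+1)) (actL l) (insL l)
          (fun b b' => actL_insL l b b') x (a 0) (EL ψ ρ φ l m (a ∘ Fin.succ)),
        ih (a := a ∘ Fin.succ)]

lemma liftOp_mulAtL (hco : IsCocommutative K C) (hψm : IsMeasuring K A B C ψ)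
    (l : ℕ) : ∀ (j : Fin l) (x : A) (m : M) (a : Fin l → A),
    liftOp ψ ρ (mulAtL l j) x (EL ψ ρ φ l m a)
      = EL ψ ρ φ l m (Function.update a j (x * a j)) := by
  induction l with
  | zero => exact fun j => j.elim0
  | succ l ih =>
      intro j x m a
      cases j using Fin.cases with
      | zero =>
          rw [EL_succ,
            liftOp_merge ψ ρ hψm (insL l) (mulAtL (l+1) 0) (insL l)
              (fun b b' => mulAt0_insL l b b') x (a 0) (EL ψ ρ φ l m (a ∘ Fin.succ)),
            EL_succ]
          have h0 : Function.update a 0 (x * a 0) 0 = x * a 0 := Function.update_self _ _ _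
          have h1 : Function.update a 0 (x * a 0) ∘ Fin.succ = a ∘ Fin.succ :=
            Function.update_comp_eq_of_forall_ne _ _ fun i => Fin.succ_ne_zero i
          rw [h0, h1]
      | succ p =>
          rw [EL_succ,
            liftOp_swap ψ ρ hco (insL l) (mulAtL (l+1) p.succ) (mulAtL l p) (insL l)
              (fun b b' => mulAtSucc_insL l p b b') x (a 0) (EL ψ ρ φ l m (a ∘ Fin.succ)),
            ih p x m (a ∘ Fin.succ), EL_succ]
          have h0 : Function.update a p.succ (x * a p.succ) 0 = a 0 :=
            Function.update_of_ne (Fin.succ_ne_zero p).symm _ _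
          have h1 : Function.update a p.succ (x * a p.succ) ∘ Fin.succ
              = Function.update (a ∘ Fin.succ) p (x * (a ∘ Fin.succ) p) :=
            Function.update_comp_eq_of_injective a (Fin.succ_injective l) p _
          rw [h0, h1]

end EL
section Fibers

/-- Restriction of `f : [k+1] → [l]` along `{0,…,k} ↪ {0,…,k+1}`, `i ↦ i` on `0` and
`i ↦ i+1` on positive `i`. -/
def gRes {k l : ℕ} (f : GammaHom (k+1) l) : GammaHom k l :=
  ⟨Fin.cases 0 (fun i => f.toFun i.succ.succ), by simp⟩

lemma gRes_toFun_succ {k l : ℕ} (f : GammaHom (k+1) l) (i : Fin k) :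
    (gRes f).toFun i.succ = f.toFun i.succ.succ := by
  simp [gRes]

lemma prod_fiber0_succ {β : Type*} [CommMonoid β] {k l : ℕ} (f : GammaHom (k+1) l)
    (v : Fin (k+1) → β) :
    ∏ i ∈ fiber0 f, v i
      = (if f.toFun (Fin.succ 0) = 0 then v 0 else 1) * ∏ i ∈ fiber0 (gRes f), v i.succ := by
  rw [fiber0, Finset.prod_filter, Fin.prod_univ_succ]
  congr 1
  rw [fiber0, Finset.prod_filter]
  exact Finset.prod_congr rfl fun i _ => by rw [gRes_toFun_succ]

lemma prod_fiber_succ {β : Type*} [CommMonoid β] {k l : ℕ} (f : GammaHom (k+1) l)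
    (j : Fin l) (v : Fin (k+1) → β) :
    ∏ i ∈ fiber f j, v i
      = (if f.toFun (Fin.succ 0) = j.succ then v 0 else 1) * ∏ i ∈ fiber (gRes f) j, v i.succ := by
  rw [fiber, Finset.prod_filter, Fin.prod_univ_succ]
  congr 1
  rw [fiber, Finset.prod_filter]
  exact Finset.prod_congr rfl fun i _ => by rw [gRes_toFun_succ]

end Fibers
section Main

variable (ψ : C →ₗ[K] A →ₗ[K] B) (ρ : CoactionStruct K C D) (φ : D →ₗ[K] M →ₗ[K] N)

lemma main_natural (hψm : IsMeasuring K A B C ψ) (hco : IsCocommutative K C)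
    (hφm : IsComodMeasuring K A B C D M N ψ ρ φ)
    (G : ∀ k l : ℕ, GammaHom k l → (Lob K B N k →ₗ[K] Lob K B N l))
    (hG : ∀ (k l : ℕ) (f : GammaHom k l) (n : N) (b : Fin k → B),
        G k l f (n ⊗ₜ[K] tprod K b) = lodayElt K B N f n b) :
    ∀ (k l : ℕ) (f : GammaHom k l) (m : M) (a : Fin k → A),
      G k l f ∘ₗ EL ψ ρ φ k m a
        = EL ψ ρ φ l ((∏ i ∈ fiber0 f, a i) • m) (fun j => ∏ i ∈ fiber f j, a i) := by
  intro k
  induction k with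
  | zero =>
      intro l f m a
      have hGW : G 0 l f ∘ₗ (W 0 : N →ₗ[K] Lob K B N 0) = (W l : N →ₗ[K] Lob K B N l) := by
        apply LinearMap.ext; intro n
        simp only [LinearMap.comp_apply, W_apply]
        rw [hG 0 l f n (fun _ => 1), lodayElt]
        simp
      rw [EL_zero, ← LinearMap.comp_assoc, hGW, Finset.prod_of_isEmpty, one_smul]
      have ha : (fun j => ∏ i ∈ fiber f j, a i) = fun _ : Fin l => (1 : A) := by
        funext j; exact Finset.prod_of_isEmpty _
      rw [ha, EL_one ψ ρ φ hψm]
  | succ k ih =>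
      intro l f m a
      rw [EL_succ]
      rcases Fin.eq_zero_or_eq_succ (f.toFun (Fin.succ 0)) with h1 | ⟨j0, h1⟩
      · -- the element `1` of the source is sent to the basepoint
        have hins : ∀ b : B, G (k+1) l f ∘ₗ (insL k : B →ₗ[K] _) b
            = (actL l : B →ₗ[K] _) b ∘ₗ G k l (gRes f) := by
          intro b
          apply lob_ext; intro n bs
          simp only [LinearMap.comp_apply, insL_tmul, tprodCons_tprod]
          rw [hG, hG, lodayElt, lodayElt, actL_tmul]
          rw [prod_fiber0_succ f (Fin.cons b bs), if_pos h1, Fin.cons_zero]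
          have hbs : ∀ i : Fin k, (Fin.cons b bs : Fin (k+1) → B) i.succ = bs i := fun i => by simp
          rw [Finset.prod_congr rfl fun i _ => hbs i, mul_smul]
          have harg : (fun j => ∏ i ∈ fiber f j, (Fin.cons b bs : Fin (k+1) → B) i)
              = fun j => ∏ i ∈ fiber (gRes f) j, bs i := by
            funext j
            rw [prod_fiber_succ f j (Fin.cons b bs),
              if_neg (by rw [h1]; exact (Fin.succ_ne_zero j).symm),
              one_mul, Finset.prod_congr rfl fun i _ => hbs i]
          rw [harg]
        rw [liftOp_push ψ ρ (insL k) (actL l) (G (k+1) l f) (G k l (gRes f)) hins (a 0)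
            (EL ψ ρ φ k m (a ∘ Fin.succ)),
          ih l (gRes f) m (a ∘ Fin.succ), liftOp_actL ψ ρ φ hco hφm]
        have hm : (∏ i ∈ fiber0 f, a i) • m
            = a 0 • ((∏ i ∈ fiber0 (gRes f), (a ∘ Fin.succ) i) • m) := by
          rw [prod_fiber0_succ f a, if_pos h1, mul_smul]
          simp [Function.comp]
        have ha : (fun j => ∏ i ∈ fiber f j, a i)
            = fun j => ∏ i ∈ fiber (gRes f) j, (a ∘ Fin.succ) i := by
          funext j
          rw [prod_fiber_succ f j a, if_neg (by rw [h1]; exact (Fin.succ_ne_zero j).symm), one_mul]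
          simp [Function.comp]
        rw [hm, ha]
      · -- the element `1` of the source is sent to `j0 + 1`
        have hins : ∀ b : B, G (k+1) l f ∘ₗ (insL k : B →ₗ[K] _) b
            = (mulAtL l j0 : B →ₗ[K] _) b ∘ₗ G k l (gRes f) := by
          intro b
          apply lob_ext; intro n bs
          simp only [LinearMap.comp_apply, insL_tmul, tprodCons_tprod]
          rw [hG, hG, lodayElt, lodayElt, mulAtL_tmul, mulAtP_tprod]
          have hbs : ∀ i : Fin k, (Fin.cons b bs : Fin (k+1) → B) i.succ = bs i := fun i => by simp
          rw [prod_fiber0_succ f (Fin.cons b bs), if_neg (by rw [h1]; exact Fin.succ_ne_zero j0),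
            one_mul, Finset.prod_congr rfl fun i _ => hbs i]
          have harg : (fun j => ∏ i ∈ fiber f j, (Fin.cons b bs : Fin (k+1) → B) i)
              = Function.update (fun j => ∏ i ∈ fiber (gRes f) j, bs i) j0
                  (b * ∏ i ∈ fiber (gRes f) j0, bs i) := by
            funext j
            rcases eq_or_ne j j0 with rfl | hj
            · rw [prod_fiber_succ f j (Fin.cons b bs), if_pos h1, Fin.cons_zero,
                Function.update_self, Finset.prod_congr rfl fun i _ => hbs i]
            · rw [prod_fiber_succ f j (Fin.cons b bs),
                if_neg (by rw [h1]; exact fun hc => hj (Fin.succ_injective _ hc).symm), one_mul,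
                Function.update_of_ne hj, Finset.prod_congr rfl fun i _ => hbs i]
          rw [harg]
        rw [liftOp_push ψ ρ (insL k) (mulAtL l j0) (G (k+1) l f) (G k l (gRes f)) hins (a 0)
            (EL ψ ρ φ k m (a ∘ Fin.succ)),
          ih l (gRes f) m (a ∘ Fin.succ), liftOp_mulAtL ψ ρ φ hco hψm l j0 (a 0)]
        have hm : (∏ i ∈ fiber0 f, a i) = ∏ i ∈ fiber0 (gRes f), (a ∘ Fin.succ) i := by
          rw [prod_fiber0_succ f a, if_neg (by rw [h1]; exact Fin.succ_ne_zero j0), one_mul]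
          simp [Function.comp]
        have ha : (fun j => ∏ i ∈ fiber f j, a i)
            = Function.update (fun j => ∏ i ∈ fiber (gRes f) j, (a ∘ Fin.succ) i) j0
                (a 0 * ∏ i ∈ fiber (gRes f) j0, (a ∘ Fin.succ) i) := by
          funext j
          rcases eq_or_ne j j0 with rfl | hj
          · rw [prod_fiber_succ f j a, if_pos h1, Function.update_self]
            simp [Function.comp]
          · rw [prod_fiber_succ f j a,
              if_neg (by rw [h1]; exact fun hc => hj (Fin.succ_injective _ hc).symm), one_mul,
              Function.update_of_ne hj]
            simp [Function.comp]
        rw [hm, ha]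

end Main
section Eta

variable (ψ : C →ₗ[K] A →ₗ[K] B) (ρ : CoactionStruct K C D) (φ : D →ₗ[K] M →ₗ[K] N)

lemma EL_m_add (k : ℕ) : ∀ (m m' : M) (a : Fin k → A),
    EL ψ ρ φ k (m + m') a = EL ψ ρ φ k m a + EL ψ ρ φ k m' a := by
  induction k with
  | zero =>
      intro m m' a
      rw [EL_zero, EL_zero, EL_zero, map_add, LinearMap.comp_add]
  | succ k ih =>
      intro m m' a
      rw [EL_succ, EL_succ, EL_succ, ih, liftOp_E_add]

lemma EL_m_smul (k : ℕ) : ∀ (r : K) (m : M) (a : Fin k → A),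
    EL ψ ρ φ k (r • m) a = r • EL ψ ρ φ k m a := by
  induction k with
  | zero =>
      intro r m a
      rw [EL_zero, EL_zero, map_smul, LinearMap.comp_smul]
  | succ k ih =>
      intro r m a
      rw [EL_succ, EL_succ, ih, liftOp_E_smul]

lemma EL_a_add (k : ℕ) : ∀ (m : M) (a : Fin k → A) (i : Fin k) (x y : A),
    EL ψ ρ φ k m (Function.update a i (x + y))
      = EL ψ ρ φ k m (Function.update a i x) + EL ψ ρ φ k m (Function.update a i y) := by
  induction k with
  | zero => exact fun _ _ i => i.elim0
  | succ k ih =>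
      intro m a i x y
      have h1z : ∀ z : A, Function.update a 0 z ∘ Fin.succ = a ∘ Fin.succ := fun z =>
        Function.update_comp_eq_of_forall_ne _ _ fun i => Fin.succ_ne_zero i
      have h0z : ∀ (p : Fin k) (z : A), Function.update a p.succ z 0 = a 0 := fun p z =>
        Function.update_of_ne (Fin.succ_ne_zero p).symm _ _
      have h1s : ∀ (p : Fin k) (z : A), Function.update a p.succ z ∘ Fin.succ
          = Function.update (a ∘ Fin.succ) p z := fun p z =>
        Function.update_comp_eq_of_injective a (Fin.succ_injective k) p z
      cases i using Fin.cases with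
      | zero =>
          rw [EL_succ, EL_succ, EL_succ, h1z, h1z, h1z, Function.update_self,
            Function.update_self, Function.update_self, liftOp_x_add]
      | succ p =>
          rw [EL_succ, EL_succ, EL_succ, h0z, h0z, h0z, h1s, h1s, h1s,
            ih m (a ∘ Fin.succ) p x y, liftOp_E_add]

lemma EL_a_smul (k : ℕ) : ∀ (m : M) (a : Fin k → A) (i : Fin k) (r : K) (x : A),
    EL ψ ρ φ k m (Function.update a i (r • x))
      = r • EL ψ ρ φ k m (Function.update a i x) := by
  induction k with
  | zero => exact fun _ _ i => i.elim0
  | succ k ih =>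
      intro m a i r x
      have h1z : ∀ z : A, Function.update a 0 z ∘ Fin.succ = a ∘ Fin.succ := fun z =>
        Function.update_comp_eq_of_forall_ne _ _ fun i => Fin.succ_ne_zero i
      have h0z : ∀ (p : Fin k) (z : A), Function.update a p.succ z 0 = a 0 := fun p z =>
        Function.update_of_ne (Fin.succ_ne_zero p).symm _ _
      have h1s : ∀ (p : Fin k) (z : A), Function.update a p.succ z ∘ Fin.succ
          = Function.update (a ∘ Fin.succ) p z := fun p z =>
        Function.update_comp_eq_of_injective a (Fin.succ_injective k) p z
      cases i using Fin.cases with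
      | zero =>
          rw [EL_succ, EL_succ, h1z, h1z, Function.update_self, Function.update_self,
            liftOp_x_smul]
      | succ p =>
          rw [EL_succ, EL_succ, h0z, h0z, h1s, h1s, ih m (a ∘ Fin.succ) p r x, liftOp_E_smul]

/-- The Sweedler chain map as a multilinear map in the algebra slots. -/
noncomputable def ELmultilin (k : ℕ) (t : D) (m : M) :
    MultilinearMap K (fun _ : Fin k => A) (Lob K B N k) where
  toFun a := EL ψ ρ φ k m a t
  map_update_add' := by
    intro dec a i x y
    cases Subsingleton.elim dec (instDecidableEqFin k)
    have h := LinearMap.congr_fun (EL_a_add ψ ρ φ k m a i x y) t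
    simpa using h
  map_update_smul' := by
    intro dec a i r x
    cases Subsingleton.elim dec (instDecidableEqFin k)
    have h := LinearMap.congr_fun (EL_a_smul ψ ρ φ k m a i r x) t
    simpa using h

/-- The components of the natural transformation `L^φ(t)`. -/
noncomputable def etaMap (k : ℕ) (t : D) : Lob K A M k →ₗ[K] Lob K B N k :=
  TensorProduct.lift
  { toFun := fun m => PiTensorProduct.lift (ELmultilin ψ ρ φ k t m)
    map_add' := fun m m' => by
      have h : ELmultilin ψ ρ φ k t (m + m')
          = ELmultilin ψ ρ φ k t m + ELmultilin ψ ρ φ k t m' := by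
        apply MultilinearMap.ext; intro a
        have h2 := LinearMap.congr_fun (EL_m_add ψ ρ φ k m m' a) t
        simpa [ELmultilin] using h2
      rw [h, map_add]
    map_smul' := fun r m => by
      have h : ELmultilin ψ ρ φ k t (r • m) = r • ELmultilin ψ ρ φ k t m := by
        apply MultilinearMap.ext; intro a
        have h2 := LinearMap.congr_fun (EL_m_smul ψ ρ φ k r m a) t
        simpa [ELmultilin] using h2
      rw [h, map_smul]
      rfl }

lemma etaMap_tmul (k : ℕ) (t : D) (m : M) (a : Fin k → A) :
    etaMap ψ ρ φ k t (m ⊗ₜ[K] tprod K a) = EL ψ ρ φ k m a t := by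
  simp [etaMap, ELmultilin]

end Eta
end Dev

end MeasuringProof

/-- Lemma 2.2. Let `ψ : C →ₗ[K] Hom_K(A,B)` be a cocommutative
coalgebra measuring between commutative algebras and `φ : D →ₗ[K] Hom_K(M,N)` a
`C`-comodule measuring relative to `ψ`.  Given the Loday `Γ`-modules `L(A,M)` and
`L(B,N)` (families `F`, `G` of linear maps acting by the Loday formula on pure tensors),
for each `t ∈ D` the maps `L^φ(t)[k] : M ⊗ A^{⊗k} → N ⊗ B^{⊗k}`,
`m ⊗ a₁ ⊗ ⋯ ⊗ aₖ ↦ Σ φ t₍₀₎ m ⊗ ψ t₍₁₎ a₁ ⊗ ⋯ ⊗ ψ t₍ₖ₎ aₖ`, are well-defined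
`K`-linear maps and assemble into a natural transformation `L(A,M) ⟶ L(B,N)`. -/
theorem measuring_loday_natural (K A B C D M N : Type) [Field K]
    [CommRing A] [Algebra K A] [CommRing B] [Algebra K B]
    [AddCommGroup C] [Module K C] [Coalgebra K C]
    [AddCommGroup D] [Module K D]
    [AddCommGroup M] [Module K M] [Module A M] [IsScalarTower K A M] [SMulCommClass K A M]
    [AddCommGroup N] [Module K N] [Module B N] [IsScalarTower K B N] [SMulCommClass K B N]
    (ψ : C →ₗ[K] A →ₗ[K] B) (hψ : IsMeasuring K A B C ψ)
    (hcocomm : IsCocommutative K C)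
    (ρ : CoactionStruct K C D) (φ : D →ₗ[K] M →ₗ[K] N)
    (hφ : IsComodMeasuring K A B C D M N ψ ρ φ)
    (F : ∀ k l : ℕ, GammaHom k l → (Lob K A M k →ₗ[K] Lob K A M l))
    (hF : ∀ (k l : ℕ) (f : GammaHom k l) (m : M) (a : Fin k → A),
        F k l f (m ⊗ₜ[K] tprod K a) = lodayElt K A M f m a)
    (G : ∀ k l : ℕ, GammaHom k l → (Lob K B N k →ₗ[K] Lob K B N l))
    (hG : ∀ (k l : ℕ) (f : GammaHom k l) (n : N) (b : Fin k → B),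
        G k l f (n ⊗ₜ[K] tprod K b) = lodayElt K B N f n b)
    (t : D) :
    ∃ η : ∀ k : ℕ, Lob K A M k →ₗ[K] Lob K B N k,
      (∀ (k : ℕ) (m : M) (a : Fin k → A),
          η k (m ⊗ₜ[K] tprod K a) =
            measurePair K A B C D M N ψ φ k m a (coactIter K C D ρ k t)) ∧
      (∀ (k l : ℕ) (f : GammaHom k l), (G k l f) ∘ₗ η k = η l ∘ₗ (F k l f)) := by
  refine ⟨fun k => MeasuringProof.etaMap ψ ρ φ k t, fun k m a => ?_, fun k l f => ?_⟩
  · rw [MeasuringProof.etaMap_tmul]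
    rfl
  · apply MeasuringProof.lobA_ext
    intro m a
    have hmain := LinearMap.congr_fun
      (MeasuringProof.main_natural ψ ρ φ hψ hcocomm hφ G hG k l f m a) t
    simp only [LinearMap.comp_apply] at hmain ⊢
    rw [MeasuringProof.etaMap_tmul, hmain, hF k l f m a, lodayElt,
      MeasuringProof.etaMap_tmul]
end

section
/- Let K be a field, A and B commutative K-algebras, C a cocommutative K-coalgebra, ψ : C → Hom_K(A,B) a cocommutative coalgebra measuring, M an A-module, N a B-module, D a C-comodule, and φ : D → Hom_K(M,N) a C-comodule measuring from M to N relative to ψ. Let k, l ≥ 0 and let f : {0,1,…,k} → {0,1,…,l} be a map with f(0) = 0. Then for all t ∈ D, m ∈ M and a₁,…,a_k ∈ A: Σ ( φ(t₍₀₎)(m) · ∏_{i ∈ f⁻¹(0), i ≠ 0} ψ(t₍ᵢ₎)(a_i) ) ⊗ ( ∏_{i ∈ f⁻¹(1)} ψ(t₍ᵢ₎)(a_i) ) ⊗ … ⊗ ( ∏_{i ∈ f⁻¹(l)} ψ(t₍ᵢ₎)(a_i) ) = Σ φ(t₍₀₎)( m · ∏_{i ∈ f⁻¹(0), i ≠ 0}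 a_i ) ⊗ ψ(t₍₁₎)( ∏_{i ∈ f⁻¹(1)} a_i ) ⊗ … ⊗ ψ(t₍ₗ₎)( ∏_{i ∈ f⁻¹(l)} a_i ) as elements of N ⊗ B^{⊗l}, where empty products equal 1, the left-hand sum is over the iterated coefficients t₍₀₎ ⊗ t₍₁₎ ⊗ … ⊗ t₍ₖ₎ (coaction followed by (k−1)-fold comultiplication on the C-factors), and the right-hand sum over t₍₀₎ ⊗ t₍₁₎ ⊗ … ⊗ t₍ₗ₎ (coaction followed by (l−1)-fold comultiplication). -/
/-!
Common infrastructure: the skeletal category `Γ` of finite pointed sets, coalgebra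
measurings, comodule measurings, iterated comultiplications/coactions, the Sweedler-type
chain-level maps of a measuring, the Loday `Γ`-module data, and higher order Hochschild
homology of a `Γ`-module with respect to a pointed simplicial set (via left Kan extension
along `Γ → Sets_⋆`, followed by the Moore (alternating face map) complex and homology).
-/

open CategoryTheory TensorProduct PiTensorProduct

/-! ### Auxiliary lemmas for Statement 4 -/

section Aux1
set_option linter.unusedSectionVars false

variable (K A B C D M N : Type) [Field K]
variable [CommRing A] [Algebra K A] [CommRing B] [Algebra K B]
variable [AddCommGroup C] [Module K C] [Coalgebra K C]
variable [AddCommGroup D] [Module K D]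
variable [AddCommGroup M] [Module K M] [Module A M] [IsScalarTower K A M] [SMulCommClass K A M]
variable [AddCommGroup N] [Module K N] [Module B N] [IsScalarTower K B N] [SMulCommClass K B N]
variable (ψ : C →ₗ[K] A →ₗ[K] B) (φ : D →ₗ[K] M →ₗ[K] N)

lemma tprodCons_tprod (k : ℕ) (b : B) (bs : Fin k → B) :
    tprodCons K B k b (PiTensorProduct.tprod K bs) = PiTensorProduct.tprod K (Fin.cons b bs) := by
  simp [tprodCons]

lemma measurePair_zero (m : M) (a : Fin 0 → A) (d : D) :
    measurePair K A B C D M N ψ φ 0 m a d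
      = (φ d m) ⊗ₜ[K] PiTensorProduct.tprod K (fun _ : Fin 0 => (1:B)) := rfl

lemma measurePair_succ_tmul (k : ℕ) (m : M) (a : Fin (k+1) → A) (c : C) (x : TD K C D k) :
    measurePair K A B C D M N ψ φ (k+1) m a
        ((c ⊗ₜ[K] x : C ⊗[K] TD K C D k) : TD K C D (k+1))
      = LinearMap.lTensor N (tprodCons K B k (ψ c (a 0)))
          (measurePair K A B C D M N ψ φ k m (a ∘ Fin.succ) x) := by
  simp only [measurePair]
  erw [TensorProduct.lift.tmul]

lemma comulIterTail_lTensor (k : ℕ) (X : D →ₗ[K] TD K C D k) :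
    (((TensorProduct.assoc K C C (TD K C D k)).toLinearMap ∘ₗ
      (Coalgebra.comul (R := K) (A := C)).rTensor (TD K C D k)) ∘ₗ X.lTensor C)
    = LinearMap.lTensor C (X.lTensor C) ∘ₗ
      ((TensorProduct.assoc K C C D).toLinearMap ∘ₗ
        (Coalgebra.comul (R := K) (A := C)).rTensor D) := by
  apply TensorProduct.ext'
  intro c d
  simp only [LinearMap.comp_apply, LinearMap.lTensor_tmul, LinearMap.rTensor_tmul]
  generalize (Coalgebra.comul (R := K) c) = z
  induction z using TensorProduct.induction_on with
  | zero => simp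
  | tmul c1 c2 => simp
  | add y z hy hz => simp only [add_tmul, map_add, hy, hz]

lemma coactIter_succ (ρ : CoactionStruct K C D) (k : ℕ) :
    coactIter K C D ρ (k+1) = (coactIter K C D ρ k).lTensor C ∘ₗ ρ.δ := by
  induction k with
  | zero =>
    show LinearMap.id ∘ₗ ρ.δ = (LinearMap.id).lTensor C ∘ₗ ρ.δ
    rw [LinearMap.lTensor_id]
  | succ k ih =>
    have h1 : coactIter K C D ρ (k+2) =
        (((TensorProduct.assoc K C C (TD K C D k)).toLinearMap ∘ₗ
          (Coalgebra.comul (R := K) (A := C)).rTensor (TD K C D k)) ∘ₗ comulIterTail K C D k)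
          ∘ₗ ρ.δ := rfl
    have h2 : comulIterTail K C D k ∘ₗ ρ.δ = coactIter K C D ρ (k+1) := rfl
    rw [h1]
    apply LinearMap.ext; intro t
    have e1 := LinearMap.congr_fun (comulIterTail_lTensor K C D k (coactIter K C D ρ k)) (ρ.δ t)
    have e2 := LinearMap.congr_fun ρ.coassoc t
    simp only [LinearMap.comp_apply] at e1 e2
    have e3 : comulIterTail K C D k (ρ.δ t) = LinearMap.lTensor C (coactIter K C D ρ k) (ρ.δ t) :=
      LinearMap.congr_fun ih t
    exact (congrArg (fun z : C ⊗[K] TD K C D k => (TensorProduct.assoc K C C (TD K C D k))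
      ((Coalgebra.comul (R := K) (A := C)).rTensor (TD K C D k) z)) e3).trans
      (e1.trans ((congrArg _ e2).trans (by
        rw [ih]
        exact (LinearMap.congr_fun (LinearMap.lTensor_comp (M := C)
          (g := LinearMap.lTensor C (coactIter K C D ρ k)) (f := ρ.δ)) (ρ.δ t)).symm)))

lemma update_LinearMap_apply (l : ℕ) (i : Fin l) (b : B) (bs : Fin l → B) :
    (fun j => Function.update (fun _ : Fin l => (LinearMap.id : B →ₗ[K] B)) i
      (LinearMap.mulLeft K b) j (bs j)) = Function.update bs i (b * bs i) := by
  funext j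
  rcases eq_or_ne j i with h | h
  · subst h; simp
  · simp [Function.update_of_ne h]

/-- Multiplication by `b` in the `i`-th slot of `B^{⊗l}`, as a bilinear map. -/
noncomputable def mulSlot (l : ℕ) (i : Fin l) :
    B →ₗ[K] (⨂[K] (_ : Fin l), B) →ₗ[K] (⨂[K] (_ : Fin l), B) where
  toFun b := PiTensorProduct.map
    (Function.update (fun _ : Fin l => (LinearMap.id : B →ₗ[K] B)) i (LinearMap.mulLeft K b))
  map_add' b b' := by
    apply PiTensorProduct.ext; apply MultilinearMap.ext; intro bs
    simp only [LinearMap.compMultilinearMap_apply, PiTensorProduct.map_tprod,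
      LinearMap.add_apply, update_LinearMap_apply K B l i]
    rw [add_mul]
    exact MultilinearMap.map_update_add _ bs i _ _
  map_smul' c b := by
    apply PiTensorProduct.ext; apply MultilinearMap.ext; intro bs
    simp only [LinearMap.compMultilinearMap_apply, PiTensorProduct.map_tprod,
      LinearMap.smul_apply, RingHom.id_apply, update_LinearMap_apply K B l i]
    rw [smul_mul_assoc]
    exact MultilinearMap.map_update_smul _ bs i _ _

lemma mulSlot_tprod (l : ℕ) (i : Fin l) (b : B) (bs : Fin l → B) :
    mulSlot K B l i b (PiTensorProduct.tprod K bs) = PiTensorProduct.tprod K (Function.update bs i (b * bs i)) := by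
  simp [mulSlot, PiTensorProduct.map_tprod, update_LinearMap_apply K B l i]

/-- Multiplication by `b` in the `j`-th slot of `N ⊗ B^{⊗l}` (the `N`-factor for
`j = 0`, the `(j-1)`-st `B`-factor otherwise), as a bilinear map. -/
noncomputable def slotMul (l : ℕ) (j : Fin (l+1)) :
    B →ₗ[K] Lob K B N l →ₗ[K] Lob K B N l :=
  Fin.cases
    ((LinearMap.rTensorHom (⨂[K] (_ : Fin l), B)) ∘ₗ lsmulKB K B N)
    (fun i => (LinearMap.lTensorHom N) ∘ₗ mulSlot K B l i) j

lemma slotMul_zero (l : ℕ) (b : B) :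
    slotMul K B N l 0 b = LinearMap.rTensor _ (lsmulKB K B N b) := rfl

lemma slotMul_succ (l : ℕ) (i : Fin l) (b : B) :
    slotMul K B N l i.succ b = LinearMap.lTensor N (mulSlot K B l i b) := by
  simp [slotMul]

lemma mulSlot_comp_tprodCons_zero (l : ℕ) (b b₀ : B) :
    mulSlot K B (l+1) 0 b ∘ₗ tprodCons K B l b₀ = tprodCons K B l (b * b₀) := by
  apply PiTensorProduct.ext; apply MultilinearMap.ext; intro bs
  simp only [LinearMap.compMultilinearMap_apply, LinearMap.comp_apply,
    tprodCons_tprod, mulSlot_tprod]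
  rw [Fin.cons_zero, Fin.update_cons_zero]

lemma mulSlot_comp_tprodCons_succ (l : ℕ) (i : Fin l) (b b₀ : B) :
    mulSlot K B (l+1) i.succ b ∘ₗ tprodCons K B l b₀
      = tprodCons K B l b₀ ∘ₗ mulSlot K B l i b := by
  apply PiTensorProduct.ext; apply MultilinearMap.ext; intro bs
  simp only [LinearMap.compMultilinearMap_apply, LinearMap.comp_apply,
    tprodCons_tprod, mulSlot_tprod]
  rw [Fin.cons_succ, Fin.cons_update]

lemma slotMul_zero_comp_lTensor (l : ℕ) (b : B)
    (g : (⨂[K] (_ : Fin l), B) →ₗ[K] ⨂[K] (_ : Fin (l+1)), B) :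
    slotMul K B N (l+1) 0 b ∘ₗ LinearMap.lTensor N g
      = LinearMap.lTensor N g ∘ₗ slotMul K B N l 0 b := by
  rw [slotMul_zero, slotMul_zero]
  apply TensorProduct.ext'
  intro n x
  simp

section Lifts

variable (X Y E : Type) [AddCommGroup X] [Module K X] [AddCommGroup Y] [Module K Y]
  [AddCommGroup E] [Module K E]

lemma lift_comp_lTensor (f : C →ₗ[K] X →ₗ[K] E) (g : Y →ₗ[K] X) :
    TensorProduct.lift f ∘ₗ LinearMap.lTensor C g = TensorProduct.lift (f.compl₂ g) := by
  apply TensorProduct.ext'; intro c y; simp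

lemma lift_comp_rTensor (f : X →ₗ[K] D →ₗ[K] E) (u : C →ₗ[K] X) :
    TensorProduct.lift f ∘ₗ LinearMap.rTensor D u = TensorProduct.lift (f ∘ₗ u) := by
  apply TensorProduct.ext'; intro c d; simp

/-- The linear map `C ⊗ (C ⊗ D) → E` induced by a trilinear map. -/
noncomputable def TL (F : C →ₗ[K] C →ₗ[K] D →ₗ[K] E) : C ⊗[K] (C ⊗[K] D) →ₗ[K] E :=
  TensorProduct.lift ((TensorProduct.uncurry (RingHom.id K) C D E) ∘ₗ F)

lemma TL_tmul (F : C →ₗ[K] C →ₗ[K] D →ₗ[K] E) (c c' : C) (d : D) :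
    TL K C D E F (c ⊗ₜ[K] (c' ⊗ₜ[K] d)) = F c c' d := by
  simp [TL]

/-- Cocommutativity swap: applying a trilinear map to the two-fold coaction is
invariant under flipping the two `C`-arguments. -/
lemma TL_flip_coact (hcocomm : IsCocommutative K C) (ρ : CoactionStruct K C D)
    (F : C →ₗ[K] C →ₗ[K] D →ₗ[K] E) :
    TL K C D E F.flip ∘ₗ ρ.δ.lTensor C ∘ₗ ρ.δ = TL K C D E F ∘ₗ ρ.δ.lTensor C ∘ₗ ρ.δ := by
  have hco : ρ.δ.lTensor C ∘ₗ ρ.δ = (TensorProduct.assoc K C C D).toLinearMap ∘ₗ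
      (Coalgebra.comul (R := K) (A := C)).rTensor D ∘ₗ ρ.δ := ρ.coassoc.symm
  have hswap : ∀ (G : C →ₗ[K] C →ₗ[K] D →ₗ[K] E),
      (TL K C D E G ∘ₗ (TensorProduct.assoc K C C D).toLinearMap) ∘ₗ
        ((TensorProduct.comm K C C).toLinearMap.rTensor D)
      = TL K C D E G.flip ∘ₗ (TensorProduct.assoc K C C D).toLinearMap := by
    intro G
    apply TensorProduct.ext_threefold
    intro c c' d
    simp [TL_tmul]
  rw [hco]
  apply LinearMap.ext; intro t
  simp only [LinearMap.comp_apply]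
  have h1 := LinearMap.congr_fun (hswap F)
    ((Coalgebra.comul (R := K) (A := C)).rTensor D (ρ.δ t))
  simp only [LinearMap.comp_apply] at h1
  rw [← h1]
  congr 1
  rw [← LinearMap.comp_apply (LinearMap.rTensor D _), ← LinearMap.rTensor_comp, hcocomm]

/-- Prepending a factor to `N ⊗ B^{⊗l}`, as a bilinear map. -/
noncomputable def consBil (l : ℕ) : B →ₗ[K] Lob K B N l →ₗ[K] Lob K B N (l+1) :=
  (LinearMap.lTensorHom N) ∘ₗ tprodCons K B l

lemma consBil_apply (l : ℕ) (b : B) (x : Lob K B N l) :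
    consBil K B N l b x = LinearMap.lTensor N (tprodCons K B l b) x := rfl

lemma slotMul_consBil_zero (l : ℕ) (b b' : B) (x : Lob K B N l) :
    slotMul K B N (l+1) ((0 : Fin (l+1)).succ) b (consBil K B N l b' x)
      = consBil K B N l (b * b') x := by
  rw [slotMul_succ, consBil_apply, consBil_apply, ← LinearMap.comp_apply,
    ← LinearMap.lTensor_comp, mulSlot_comp_tprodCons_zero]

lemma slotMul_consBil_succ (l : ℕ) (i : Fin l) (b b' : B) (x : Lob K B N l) :
    slotMul K B N (l+1) (i.succ.succ) b (consBil K B N l b' x)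
      = consBil K B N l b' (slotMul K B N l i.succ b x) := by
  rw [slotMul_succ, consBil_apply, consBil_apply, ← LinearMap.comp_apply,
    ← LinearMap.lTensor_comp, mulSlot_comp_tprodCons_succ, LinearMap.lTensor_comp,
    LinearMap.comp_apply, slotMul_succ]

lemma slotMul_consBil_smul (l : ℕ) (b b' : B) (x : Lob K B N l) :
    slotMul K B N (l+1) 0 b (consBil K B N l b' x)
      = consBil K B N l b' (slotMul K B N l 0 b x) := by
  have := LinearMap.congr_fun (slotMul_zero_comp_lTensor K B N l b (tprodCons K B l b')) x
  simpa [consBil_apply] using this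

end Lifts

section Trilin

variable (E₁ E₂ : Type) [AddCommGroup E₁] [Module K E₁] [AddCommGroup E₂] [Module K E₂]

/-- `(c, c', d) ↦ S c (R c' d)` as a trilinear map. -/
noncomputable def FF (S : C →ₗ[K] E₁ →ₗ[K] E₂) (R : C →ₗ[K] D →ₗ[K] E₁) :
    C →ₗ[K] C →ₗ[K] D →ₗ[K] E₂ :=
  ((LinearMap.llcomp K C (D →ₗ[K] E₁) (D →ₗ[K] E₂)).flip R) ∘ₗ
    (LinearMap.llcomp K D E₁ E₂) ∘ₗ S

lemma FF_apply (S : C →ₗ[K] E₁ →ₗ[K] E₂) (R : C →ₗ[K] D →ₗ[K] E₁) (c c' : C) (d : D) :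
    FF K C D E₁ E₂ S R c c' d = S c (R c' d) := rfl

lemma key_step (ρ : CoactionStruct K C D) (S : C →ₗ[K] E₁ →ₗ[K] E₂)
    (R : C →ₗ[K] D →ₗ[K] E₁) :
    TensorProduct.lift (S.compl₂ (TensorProduct.lift R ∘ₗ ρ.δ))
      = TL K C D E₂ (FF K C D E₁ E₂ S R) ∘ₗ ρ.δ.lTensor C := by
  apply TensorProduct.ext'; intro c d
  simp only [LinearMap.comp_apply, TensorProduct.lift.tmul, LinearMap.compl₂_apply,
    LinearMap.lTensor_tmul]
  have h1 : ∀ z : C ⊗[K] D, TL K C D E₂ (FF K C D E₁ E₂ S R) (c ⊗ₜ z)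
      = S c (TensorProduct.lift R z) := by
    intro z; induction z using TensorProduct.induction_on with
    | zero => simp
    | tmul c' d' => simp [TL_tmul, FF_apply]
    | add y z hy hz => simp only [TensorProduct.tmul_add, map_add, hy, hz]
  rw [h1]

lemma lift_counit_smul (ρ : CoactionStruct K C D) (G : D →ₗ[K] E₁) :
    TensorProduct.lift ((LinearMap.lsmul K E₁).compl₁₂
      (Coalgebra.counit (R := K) (A := C)) G) ∘ₗ ρ.δ = G := by
  have h : TensorProduct.lift ((LinearMap.lsmul K E₁).compl₁₂
      (Coalgebra.counit (R := K) (A := C)) G)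
      = G ∘ₗ (TensorProduct.lid K D).toLinearMap ∘ₗ
          (Coalgebra.counit (R := K) (A := C)).rTensor D := by
    apply TensorProduct.ext'; intro c d
    simp [TensorProduct.lid_tmul]
  rw [h, LinearMap.comp_assoc, LinearMap.comp_assoc, ρ.rTensor_counit_comp_coaction]
  apply LinearMap.ext; intro t
  simp [TensorProduct.lid_tmul]

end Trilin

section Core

variable (ρ : CoactionStruct K C D)

lemma measurePair_coactIter_succ (l : ℕ) (m : M) (a : Fin (l+1) → A) :
    measurePair K A B C D M N ψ φ (l+1) m a ∘ₗ coactIter K C D ρ (l+1)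
      = TensorProduct.lift (((consBil K B N l) ∘ₗ (ψ.flip (a 0))).compl₂
          (measurePair K A B C D M N ψ φ l m (a ∘ Fin.succ) ∘ₗ coactIter K C D ρ l))
        ∘ₗ ρ.δ := by
  have hP : measurePair K A B C D M N ψ φ (l+1) m a ∘ₗ
      ((LinearMap.lTensor C (coactIter K C D ρ l)) : C ⊗[K] D →ₗ[K] TD K C D (l+1))
      = TensorProduct.lift (((consBil K B N l) ∘ₗ (ψ.flip (a 0))).compl₂
          (measurePair K A B C D M N ψ φ l m (a ∘ Fin.succ) ∘ₗ coactIter K C D ρ l)) := by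
    apply TensorProduct.ext'; intro c d
    simp only [TensorProduct.lift.tmul, LinearMap.compl₂_apply, LinearMap.comp_apply]
    exact measurePair_succ_tmul K A B C D M N ψ φ l m a c (coactIter K C D ρ l d)
  apply LinearMap.ext; intro t
  rw [LinearMap.comp_apply, LinearMap.comp_apply, LinearMap.congr_fun (coactIter_succ K C D ρ l) t]
  exact LinearMap.congr_fun hP (ρ.δ t)

lemma measurePair_one (hψ : IsMeasuring K A B C ψ) (l : ℕ) (m : M) :
    measurePair K A B C D M N ψ φ l m (fun _ => (1:A)) ∘ₗ coactIter K C D ρ l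
      = (TensorProduct.mk K N (⨂[K] (_ : Fin l), B)).flip (PiTensorProduct.tprod K (fun _ : Fin l => (1:B)))
          ∘ₗ φ.flip m := by
  induction l with
  | zero => apply LinearMap.ext; intro d; rfl
  | succ l ih =>
    rw [measurePair_coactIter_succ K A B C D M N ψ φ ρ l m (fun _ => (1:A)),
      show ((fun _ : Fin (l+1) => (1:A)) ∘ Fin.succ) = (fun _ : Fin l => (1:A)) from rfl, ih]
    have h1 : ((consBil K B N l) ∘ₗ (ψ.flip 1)).compl₂
          ((TensorProduct.mk K N (⨂[K] (_ : Fin l), B)).flip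
            (PiTensorProduct.tprod K (fun _ : Fin l => (1:B))) ∘ₗ φ.flip m)
        = (LinearMap.lsmul K (Lob K B N (l+1))).compl₁₂ (Coalgebra.counit (R := K) (A := C))
          ((consBil K B N l 1) ∘ₗ
            ((TensorProduct.mk K N (⨂[K] (_ : Fin l), B)).flip
              (PiTensorProduct.tprod K (fun _ : Fin l => (1:B))) ∘ₗ φ.flip m)) := by
      apply LinearMap.ext; intro c; apply LinearMap.ext; intro d
      simp only [LinearMap.compl₂_apply, LinearMap.compl₁₂_apply, LinearMap.comp_apply,
        LinearMap.flip_apply, LinearMap.lsmul_apply]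
      rw [hψ.measures_one c, map_smul, LinearMap.smul_apply]
    rw [h1, lift_counit_smul K C D _ ρ]
    apply LinearMap.ext; intro d
    simp only [LinearMap.comp_apply, LinearMap.flip_apply, TensorProduct.mk_apply,
      consBil_apply, LinearMap.lTensor_tmul, tprodCons_tprod]
    have hfun : (Fin.cons (1:B) (fun _ : Fin l => (1:B))) = (fun _ : Fin (l+1) => (1:B)) := by
      funext j; induction j using Fin.cases <;> simp
    rw [hfun]

lemma measure_smul_lemma (hψ : IsMeasuring K A B C ψ) (hcocomm : IsCocommutative K C)
    (hφ : IsComodMeasuring K A B C D M N ψ ρ φ) :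
    ∀ (l : ℕ) (aa : Fin l → A) (m : M) (a₀ : A),
    TensorProduct.lift (((slotMul K B N l 0) ∘ₗ ψ.flip a₀).compl₂
      (measurePair K A B C D M N ψ φ l m aa ∘ₗ coactIter K C D ρ l)) ∘ₗ ρ.δ
    = measurePair K A B C D M N ψ φ l (a₀ • m) aa ∘ₗ coactIter K C D ρ l := by
  intro l
  induction l with
  | zero =>
    intro aa m a₀
    have h1 : ((slotMul K B N 0 0) ∘ₗ ψ.flip a₀).compl₂
          (measurePair K A B C D M N ψ φ 0 m aa ∘ₗ coactIter K C D ρ 0)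
        = ((lsmulKB K B N).compl₁₂ (ψ.flip a₀) (φ.flip m)).compr₂
            ((TensorProduct.mk K N (⨂[K] (_ : Fin 0), B)).flip
              (PiTensorProduct.tprod K (fun _ : Fin 0 => (1:B)))) := by
      apply LinearMap.ext; intro c; apply LinearMap.ext; intro d
      simp only [LinearMap.compl₂_apply, LinearMap.compr₂_apply, LinearMap.compl₁₂_apply,
        LinearMap.comp_apply, LinearMap.flip_apply, TensorProduct.mk_apply]
      have : measurePair K A B C D M N ψ φ 0 m aa (coactIter K C D ρ 0 d)
          = (φ d m) ⊗ₜ[K] PiTensorProduct.tprod K (fun _ : Fin 0 => (1:B)) := rfl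
      rw [this, slotMul_zero]
      rfl
    rw [h1, TensorProduct.lift_compr₂, LinearMap.comp_assoc]
    apply LinearMap.ext; intro t
    simp only [LinearMap.comp_apply, LinearMap.flip_apply, TensorProduct.mk_apply]
    have : measurePair K A B C D M N ψ φ 0 (a₀ • m) aa (coactIter K C D ρ 0 t)
        = (φ t (a₀ • m)) ⊗ₜ[K] PiTensorProduct.tprod K (fun _ : Fin 0 => (1:B)) := rfl
    rw [this, hφ.measures t a₀ m]
  | succ l ih =>
    intro aa m a₀
    rw [measurePair_coactIter_succ K A B C D M N ψ φ ρ l m aa]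
    set S := (slotMul K B N (l+1) 0) ∘ₗ ψ.flip a₀ with hS
    set S₂ := (consBil K B N l) ∘ₗ ψ.flip (aa 0) with hS₂
    set Qm := measurePair K A B C D M N ψ φ l m (aa ∘ Fin.succ) ∘ₗ coactIter K C D ρ l
      with hQm
    rw [key_step K C D _ _ ρ S (S₂.compl₂ Qm), LinearMap.comp_assoc]
    have hswap := TL_flip_coact K C D (Lob K B N (l+1)) hcocomm ρ
      (FF K C D (Lob K B N (l+1)) (Lob K B N (l+1)) S (S₂.compl₂ Qm)).flip
    rw [LinearMap.flip_flip] at hswap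
    rw [hswap]
    have hflip : (FF K C D (Lob K B N (l+1)) (Lob K B N (l+1)) S (S₂.compl₂ Qm)).flip
        = FF K C D (Lob K B N l) (Lob K B N (l+1)) S₂
            (((slotMul K B N l 0) ∘ₗ ψ.flip a₀).compl₂ Qm) := by
      apply LinearMap.ext; intro c; apply LinearMap.ext; intro c'
      apply LinearMap.ext; intro d
      simp only [LinearMap.flip_apply, FF_apply, LinearMap.compl₂_apply, hS, hS₂,
        LinearMap.comp_apply]
      exact slotMul_consBil_smul K B N l (ψ c' a₀) (ψ c (aa 0)) (Qm d)
    rw [hflip, ← LinearMap.comp_assoc, ← key_step K C D _ _ ρ S₂, hQm,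
      ih (aa ∘ Fin.succ) m a₀, hS₂,
      ← measurePair_coactIter_succ K A B C D M N ψ φ ρ l (a₀ • m) aa]

lemma measure_mul_lemma (hψ : IsMeasuring K A B C ψ) (hcocomm : IsCocommutative K C) :
    ∀ (l : ℕ) (i : Fin l) (aa : Fin l → A) (m : M) (a₀ : A),
    TensorProduct.lift (((slotMul K B N l i.succ) ∘ₗ ψ.flip a₀).compl₂
      (measurePair K A B C D M N ψ φ l m aa ∘ₗ coactIter K C D ρ l)) ∘ₗ ρ.δ
    = measurePair K A B C D M N ψ φ l m (Function.update aa i (a₀ * aa i))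
        ∘ₗ coactIter K C D ρ l := by
  intro l
  induction l with
  | zero => exact fun i => i.elim0
  | succ l ih =>
    intro i
    induction i using Fin.cases with
    | zero =>
      intro aa m a₀
      rw [measurePair_coactIter_succ K A B C D M N ψ φ ρ l m aa]
      set S := (slotMul K B N (l+1) ((0 : Fin (l+1)).succ)) ∘ₗ ψ.flip a₀ with hS
      set S₂ := (consBil K B N l) ∘ₗ ψ.flip (aa 0) with hS₂
      set Qm := measurePair K A B C D M N ψ φ l m (aa ∘ Fin.succ) ∘ₗ coactIter K C D ρ l
        with hQm
      rw [key_step K C D _ _ ρ S (S₂.compl₂ Qm), LinearMap.comp_assoc, ← ρ.coassoc,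
        ← LinearMap.comp_assoc, ← LinearMap.comp_assoc]
      have hmain : ((TL K C D (Lob K B N (l+1))
            (FF K C D (Lob K B N (l+1)) (Lob K B N (l+1)) S (S₂.compl₂ Qm))
          ∘ₗ (TensorProduct.assoc K C C D).toLinearMap)
          ∘ₗ (Coalgebra.comul (R := K) (A := C)).rTensor D)
          = TensorProduct.lift
              (((consBil K B N l) ∘ₗ ψ.flip (a₀ * aa 0)).compl₂ Qm) := by
        apply TensorProduct.ext'; intro c d
        simp only [LinearMap.comp_apply, LinearMap.rTensor_tmul, TensorProduct.lift.tmul,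
          LinearMap.compl₂_apply, LinearMap.flip_apply]
        rw [hψ.measures_mul c a₀ (aa 0)]
        generalize (Coalgebra.comul (R := K) (A := C) c) = z
        induction z using TensorProduct.induction_on with
        | zero => simp
        | tmul c₁ c₂ =>
          simp only [TensorProduct.assoc_tmul, TL_tmul, FF_apply, LinearMap.compl₂_apply,
            hS, hS₂, LinearMap.comp_apply, LinearMap.flip_apply, TensorProduct.lift.tmul,
            LinearMap.compl₁₂_apply, LinearMap.mul_apply']
          exact slotMul_consBil_zero K B N l (ψ c₁ a₀) (ψ c₂ (aa 0)) (Qm d)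
        | add y z hy hz =>
          simp only [add_tmul, map_add, hy, hz, LinearMap.add_apply]
      rw [hmain]
      have hu0 : Function.update aa 0 (a₀ * aa 0) 0 = a₀ * aa 0 := by simp
      have husucc : (Function.update aa (0 : Fin (l+1)) (a₀ * aa 0)) ∘ Fin.succ
          = aa ∘ Fin.succ := by
        funext j
        simp [Function.comp, Function.update_of_ne (Fin.succ_ne_zero j)]
      rw [measurePair_coactIter_succ K A B C D M N ψ φ ρ l m
        (Function.update aa 0 (a₀ * aa 0)), hu0, husucc, hQm]
    | succ i' =>
      intro aa m a₀
      rw [measurePair_coactIter_succ K A B C D M N ψ φ ρ l m aa]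
      set S := (slotMul K B N (l+1) ((Fin.succ i').succ)) ∘ₗ ψ.flip a₀ with hS
      set S₂ := (consBil K B N l) ∘ₗ ψ.flip (aa 0) with hS₂
      set Qm := measurePair K A B C D M N ψ φ l m (aa ∘ Fin.succ) ∘ₗ coactIter K C D ρ l
        with hQm
      rw [key_step K C D _ _ ρ S (S₂.compl₂ Qm), LinearMap.comp_assoc]
      have hswap := TL_flip_coact K C D (Lob K B N (l+1)) hcocomm ρ
        (FF K C D (Lob K B N (l+1)) (Lob K B N (l+1)) S (S₂.compl₂ Qm)).flip
      rw [LinearMap.flip_flip] at hswap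
      rw [hswap]
      have hflip : (FF K C D (Lob K B N (l+1)) (Lob K B N (l+1)) S (S₂.compl₂ Qm)).flip
          = FF K C D (Lob K B N l) (Lob K B N (l+1)) S₂
              (((slotMul K B N l i'.succ) ∘ₗ ψ.flip a₀).compl₂ Qm) := by
        apply LinearMap.ext; intro c; apply LinearMap.ext; intro c'
        apply LinearMap.ext; intro d
        simp only [LinearMap.flip_apply, FF_apply, LinearMap.compl₂_apply, hS, hS₂,
          LinearMap.comp_apply]
        exact slotMul_consBil_succ K B N l i' (ψ c' a₀) (ψ c (aa 0)) (Qm d)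
      rw [hflip, ← LinearMap.comp_assoc, ← key_step K C D _ _ ρ S₂, hQm,
        ih i' (aa ∘ Fin.succ) m a₀, hS₂]
      have hu0 : Function.update aa i'.succ (a₀ * aa i'.succ) 0 = aa 0 :=
        Function.update_of_ne (Fin.succ_ne_zero i').symm _ _
      have husucc : (Function.update aa i'.succ (a₀ * aa i'.succ)) ∘ Fin.succ
          = Function.update (aa ∘ Fin.succ) i' (a₀ * (aa ∘ Fin.succ) i') := by
        funext j
        rcases eq_or_ne j i' with h | h
        · subst h; simp [Function.comp]
        · simp [Function.comp, Function.update_of_ne h,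
            Function.update_of_ne (fun hh => h (Fin.succ_injective _ hh))]
      rw [measurePair_coactIter_succ K A B C D M N ψ φ ρ l m
        (Function.update aa i'.succ (a₀ * aa i'.succ)), hu0, husucc]

end Core

end Aux1

section Gamma

/-- Deleting the point `1` from the source of `f : [k+1] → [l]`. -/
def gtail {k l : ℕ} (f : GammaHom (k+1) l) : GammaHom k l :=
  ⟨fun i => f.toFun (Fin.cases 0 (fun j => j.succ.succ) i), by simpa using f.map_zero⟩

lemma gtail_toFun_succ {k l : ℕ} (f : GammaHom (k+1) l) (j : Fin k) :
    (gtail f).toFun j.succ = f.toFun j.succ.succ := by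
  simp [gtail]

variable {γ : Type} [CommMonoid γ]

lemma prod_fiber0 {k l : ℕ} (f : GammaHom (k+1) l) (g : Fin (k+1) → γ) :
    ∏ i ∈ fiber0 f, g i
      = (if f.toFun 1 = 0 then g 0 else 1) * ∏ j ∈ fiber0 (gtail f), (g ∘ Fin.succ) j := by
  rw [fiber0, fiber0, Finset.prod_filter, Finset.prod_filter, Fin.prod_univ_succ,
    Fin.succ_zero_eq_one]
  congr 1
  all_goals
    refine Finset.prod_congr rfl fun j _ => ?_
    rw [gtail_toFun_succ]
    try rfl

lemma prod_fiber {k l : ℕ} (f : GammaHom (k+1) l) (j : Fin l) (g : Fin (k+1) → γ) :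
    ∏ i ∈ fiber f j, g i
      = (if f.toFun 1 = j.succ then g 0 else 1)
          * ∏ i ∈ fiber (gtail f) j, (g ∘ Fin.succ) i := by
  rw [fiber, fiber, Finset.prod_filter, Finset.prod_filter, Fin.prod_univ_succ,
    Fin.succ_zero_eq_one]
  congr 1
  all_goals
    refine Finset.prod_congr rfl fun i _ => ?_
    rw [gtail_toFun_succ]
    try rfl

end Gamma

section Assemble

set_option linter.unusedSectionVars false

variable (K A B C D M N : Type) [Field K]
variable [CommRing A] [Algebra K A] [CommRing B] [Algebra K B]
variable [AddCommGroup C] [Module K C] [Coalgebra K C]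
variable [AddCommGroup D] [Module K D]
variable [AddCommGroup M] [Module K M] [Module A M] [IsScalarTower K A M] [SMulCommClass K A M]
variable [AddCommGroup N] [Module K N] [Module B N] [IsScalarTower K B N] [SMulCommClass K B N]
variable (ψ : C →ₗ[K] A →ₗ[K] B) (φ : D →ₗ[K] M →ₗ[K] N)

lemma G_consBil_one {k l : ℕ} (f : GammaHom (k+1) l)
    (G : Lob K B N (k+1) →ₗ[K] Lob K B N l)
    (hG : ∀ (n : N) (b : Fin (k+1) → B), G (n ⊗ₜ[K] PiTensorProduct.tprod K b) = lodayElt K B N f n b)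
    (n : N) (bs : Fin k → B) :
    G (consBil K B N k 1 (n ⊗ₜ[K] PiTensorProduct.tprod K bs)) = lodayElt K B N (gtail f) n bs := by
  simp only [consBil_apply, LinearMap.lTensor_tmul, tprodCons_tprod, hG, lodayElt]
  rw [prod_fiber0 f (Fin.cons 1 bs)]
  have hcomp : (Fin.cons (1:B) bs) ∘ Fin.succ = bs := by
    funext j; simp
  rw [hcomp, Fin.cons_zero, ite_self, one_mul]
  have h4 : (fun j => ∏ i ∈ fiber f j, Fin.cons (1:B) bs i)
      = fun j => ∏ i ∈ fiber (gtail f) j, bs i := by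
    funext j
    rw [prod_fiber f j (Fin.cons 1 bs), hcomp, Fin.cons_zero, ite_self, one_mul]
  rw [h4]

lemma G_consBil {k l : ℕ} (f : GammaHom (k+1) l)
    (G : Lob K B N (k+1) →ₗ[K] Lob K B N l)
    (hG : ∀ (n : N) (b : Fin (k+1) → B), G (n ⊗ₜ[K] PiTensorProduct.tprod K b) = lodayElt K B N f n b)
    (b : B) :
    G ∘ₗ consBil K B N k b
      = (slotMul K B N l (f.toFun 1) b) ∘ₗ (G ∘ₗ consBil K B N k 1) := by
  apply TensorProduct.ext
  apply LinearMap.ext; intro n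
  apply PiTensorProduct.ext; apply MultilinearMap.ext; intro bs
  simp only [LinearMap.compMultilinearMap_apply, LinearMap.comp_apply,
    LinearMap.compr₂_apply, LinearMap.compr₂ₛₗ_apply, TensorProduct.mk_apply]
  rw [G_consBil_one K B N f G hG n bs]
  have hL : (consBil K B N k b) (n ⊗ₜ[K] PiTensorProduct.tprod K bs) = n ⊗ₜ[K] PiTensorProduct.tprod K (Fin.cons b bs) := by
    rw [consBil_apply, LinearMap.lTensor_tmul, tprodCons_tprod]
  rw [hL, hG, lodayElt, lodayElt]
  have hcomp : (Fin.cons b bs) ∘ Fin.succ = bs := by funext j; simp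
  rcases Fin.eq_zero_or_eq_succ (f.toFun 1) with h1 | ⟨j, h1⟩
  · rw [h1, slotMul_zero]
    rw [prod_fiber0 f (Fin.cons b bs), hcomp, h1, if_pos rfl, Fin.cons_zero]
    have hfn : ∀ j' : Fin l, ∏ i ∈ fiber f j', (Fin.cons b bs) i = ∏ i ∈ fiber (gtail f) j', bs i := by
      intro j'
      rw [prod_fiber f j' (Fin.cons b bs), hcomp, h1,
        if_neg (Fin.succ_ne_zero j').symm, one_mul]
    simp only [LinearMap.rTensor_tmul]
    rw [mul_smul]
    have h5 : (fun j => ∏ i ∈ fiber f j, Fin.cons b bs i)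
        = fun j' => ∏ i ∈ fiber (gtail f) j', bs i := funext hfn
    rw [h5]
    rfl
  · rw [h1, slotMul_succ]
    rw [prod_fiber0 f (Fin.cons b bs), hcomp, h1, if_neg (Fin.succ_ne_zero j), one_mul]
    simp only [LinearMap.lTensor_tmul, mulSlot_tprod]
    have h5 : (fun j' => ∏ i ∈ fiber f j', Fin.cons b bs i)
        = Function.update (fun j' => ∏ i ∈ fiber (gtail f) j', bs i) j
            (b * ∏ i ∈ fiber (gtail f) j, bs i) := by
      funext j'
      rw [prod_fiber f j' (Fin.cons b bs), hcomp, h1, Fin.cons_zero]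
      rcases eq_or_ne j' j with h | h
      · subst h
        rw [if_pos rfl, Function.update_self]
      · rw [if_neg (fun hh => h (Fin.succ_injective _ hh).symm),
          Function.update_of_ne h, one_mul]
    rw [h5]

lemma main_aux (ρ : CoactionStruct K C D) (hψ : IsMeasuring K A B C ψ)
    (hcocomm : IsCocommutative K C) (hφ : IsComodMeasuring K A B C D M N ψ ρ φ)
    (l : ℕ) :
    ∀ (k : ℕ) (f : GammaHom k l) (G : Lob K B N k →ₗ[K] Lob K B N l)
      (hG : ∀ (n : N) (b : Fin k → B), G (n ⊗ₜ[K] PiTensorProduct.tprod K b) = lodayElt K B N f n b)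
      (m : M) (a : Fin k → A),
    G ∘ₗ (measurePair K A B C D M N ψ φ k m a ∘ₗ coactIter K C D ρ k)
      = measurePair K A B C D M N ψ φ l ((∏ i ∈ fiber0 f, a i) • m)
          (fun j => ∏ i ∈ fiber f j, a i) ∘ₗ coactIter K C D ρ l := by
  intro k
  induction k with
  | zero =>
    intro f G hG m a
    have h0 : (∏ i ∈ fiber0 f, a i) = 1 := by simp [fiber0]
    have hj : ∀ j : Fin l, (∏ i ∈ fiber f j, a i) = 1 := fun j => by simp [fiber]
    have hfn : (fun j : Fin l => ∏ i ∈ fiber f j, a i) = fun _ => (1:A) := funext hj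
    rw [h0, hfn, one_smul, measurePair_one K A B C D M N ψ φ ρ hψ l m]
    apply LinearMap.ext; intro t
    simp only [LinearMap.comp_apply, LinearMap.flip_apply, TensorProduct.mk_apply]
    have h2 : measurePair K A B C D M N ψ φ 0 m a (coactIter K C D ρ 0 t)
        = (φ t m) ⊗ₜ[K] PiTensorProduct.tprod K (fun _ : Fin 0 => (1:B)) := rfl
    rw [h2, hG, lodayElt]
    have h3 : (∏ i ∈ fiber0 f, (fun _ : Fin 0 => (1:B)) i) = 1 := by simp [fiber0]
    rw [h3, one_smul]
    have h5 : (fun j : Fin l => ∏ _i ∈ fiber f j, (1:B)) = fun _ => (1:B) := by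
      funext j'; exact Finset.prod_const_one
    rw [h5]
  | succ k ih =>
    intro f G hG m a
    rw [measurePair_coactIter_succ K A B C D M N ψ φ ρ k m a, ← LinearMap.comp_assoc,
      ← TensorProduct.lift_compr₂]
    set Qk := measurePair K A B C D M N ψ φ k m (a ∘ Fin.succ) ∘ₗ coactIter K C D ρ k
      with hQk
    have hG1 := G_consBil_one K B N f G hG
    have ihh := ih (gtail f) (G ∘ₗ consBil K B N k 1) hG1 m (a ∘ Fin.succ)
    set m₁ := (∏ i ∈ fiber0 (gtail f), (a ∘ Fin.succ) i) • m with hm₁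
    set a₁ := fun j => ∏ i ∈ fiber (gtail f) j, (a ∘ Fin.succ) i with ha₁
    have hbb : ((((consBil K B N k) ∘ₗ ψ.flip (a 0)).compl₂ Qk).compr₂ G)
        = ((slotMul K B N l (f.toFun 1)) ∘ₗ ψ.flip (a 0)).compl₂
            (measurePair K A B C D M N ψ φ l m₁ a₁ ∘ₗ coactIter K C D ρ l) := by
      apply LinearMap.ext; intro c; apply LinearMap.ext; intro d
      simp only [LinearMap.compr₂_apply, LinearMap.compl₂_apply, LinearMap.comp_apply,
        LinearMap.flip_apply]
      have := LinearMap.congr_fun (G_consBil K B N f G hG (ψ c (a 0))) (Qk d)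
      simp only [LinearMap.comp_apply] at this
      rw [this]
      congr 1
      exact LinearMap.congr_fun ihh d
    rw [hbb]
    rcases Fin.eq_zero_or_eq_succ (f.toFun 1) with h1 | ⟨j, h1⟩
    · rw [h1, measure_smul_lemma K A B C D M N ψ φ ρ hψ hcocomm hφ l a₁ m₁ (a 0)]
      have hm : (∏ i ∈ fiber0 f, a i) • m = a 0 • m₁ := by
        rw [prod_fiber0 f a, h1, if_pos rfl, mul_smul, hm₁]
      have hfn : (fun j' : Fin l => ∏ i ∈ fiber f j', a i) = a₁ := by
        funext j'
        rw [prod_fiber f j' a, h1, if_neg (Fin.succ_ne_zero j').symm, one_mul, ha₁]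
      rw [hm, hfn]
    · rw [h1, measure_mul_lemma K A B C D M N ψ φ ρ hψ hcocomm l j a₁ m₁ (a 0)]
      have hm : (∏ i ∈ fiber0 f, a i) • m = m₁ := by
        rw [prod_fiber0 f a, h1, if_neg (Fin.succ_ne_zero j), one_mul, hm₁]
      have hfn : (fun j' : Fin l => ∏ i ∈ fiber f j', a i)
          = Function.update a₁ j (a 0 * a₁ j) := by
        funext j'
        rw [prod_fiber f j' a, h1]
        rcases eq_or_ne j' j with h | h
        · subst h
          rw [if_pos rfl, Function.update_self, ha₁]
        · rw [if_neg (fun hh => h (Fin.succ_injective _ hh).symm),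
            Function.update_of_ne h, one_mul, ha₁]
      rw [hm, hfn]

end Assemble

/-- the key computation in Lemma 2.2. With `ψ` a cocommutative
measuring between commutative algebras and `φ` a `C`-comodule measuring relative to `ψ`,
let `f : [k] → [l]` be a pointed map and let `G = L(B,N)(f)` be the Loday map for
`(B,N)` (the linear map acting by the Loday fiber-product formula on pure tensors).
Then for all `t ∈ D`, `m ∈ M`, `a₁,…,aₖ ∈ A`:
`Σ (φ t₍₀₎ m · ∏_{i ∈ f⁻¹(0), i≠0} ψ t₍ᵢ₎ aᵢ) ⊗ (∏_{i ∈ f⁻¹(1)} ψ t₍ᵢ₎ aᵢ) ⊗ ⋯ ⊗ (∏_{i ∈ f⁻¹(l)} ψ t₍ᵢ₎ aᵢ)`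
(i.e. `G` applied to `Σ φ t₍₀₎ m ⊗ ψ t₍₁₎ a₁ ⊗ ⋯ ⊗ ψ t₍ₖ₎ aₖ`) equals
`Σ φ t₍₀₎ (m · ∏_{i ∈ f⁻¹(0), i≠0} aᵢ) ⊗ ψ t₍₁₎ (∏_{i ∈ f⁻¹(1)} aᵢ) ⊗ ⋯ ⊗ ψ t₍ₗ₎ (∏_{i ∈ f⁻¹(l)} aᵢ)`
in `N ⊗ B^{⊗l}`. -/
theorem measuring_loday_compatible (K A B C D M N : Type) [Field K]
    [CommRing A] [Algebra K A] [CommRing B] [Algebra K B]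
    [AddCommGroup C] [Module K C] [Coalgebra K C]
    [AddCommGroup D] [Module K D]
    [AddCommGroup M] [Module K M] [Module A M] [IsScalarTower K A M] [SMulCommClass K A M]
    [AddCommGroup N] [Module K N] [Module B N] [IsScalarTower K B N] [SMulCommClass K B N]
    (ψ : C →ₗ[K] A →ₗ[K] B) (hψ : IsMeasuring K A B C ψ)
    (hcocomm : IsCocommutative K C)
    (ρ : CoactionStruct K C D) (φ : D →ₗ[K] M →ₗ[K] N)
    (hφ : IsComodMeasuring K A B C D M N ψ ρ φ)
    (k l : ℕ) (f : GammaHom k l)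
    (G : Lob K B N k →ₗ[K] Lob K B N l)
    (hG : ∀ (n : N) (b : Fin k → B), G (n ⊗ₜ[K] tprod K b) = lodayElt K B N f n b)
    (t : D) (m : M) (a : Fin k → A) :
    G (measurePair K A B C D M N ψ φ k m a (coactIter K C D ρ k t)) =
      measurePair K A B C D M N ψ φ l ((∏ i ∈ fiber0 f, a i) • m)
        (fun j => ∏ i ∈ fiber f j, a i) (coactIter K C D ρ l t) := by
  exact LinearMap.congr_fun
    (main_aux K A B C D M N ψ φ ρ hψ hcocomm hφ l k f G hG m a) t
end
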